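/- arXiv:1804.05277 — 10 statements merged into one kernel-verified Lean document; each statement's English description precedes it below -/
import Mathlib

section
/- For every integer l ≥ 2, the number of brick-wall lattice paths of the first type in the rectangle R = {0,…,l−1} × {0,1,2} equals the Fibonacci number F_{l+3}, i.e. B^{(1)}_{l,3} = F_{l+3}. -/
/-- A step of a brick-wall lattice path. `t = true` corresponds to paths of the
first type (up-steps from even points, down-steps from odd points), `t = false`
to paths of the second type (up-steps from odd points, down-steps from even
points). Vertical steps are forbidden from points with first coordinate `0`. -/
def BrickStep (t : Bool) (p q : ℤ × ℤ) : Prop :=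
  q = (p.1 + 1, p.2) ∨
  (q = (p.1, p.2 + 1) ∧ p.1 ≠ 0 ∧ (if t then Even (p.1 + p.2) else Odd (p.1 + p.2))) ∨
  (q = (p.1, p.2 - 1) ∧ p.1 ≠ 0 ∧ (if t then Odd (p.1 + p.2) else Even (p.1 + p.2)))

/-- The set of brick-wall lattice paths (of the first type if `t = true`, of the
second type if `t = false`) in the rectangle `{0,…,l−1} × {0,…,w−1}`: nonempty
lists of pairwise distinct points of the rectangle, starting on the left side,
ending on the right side, whose consecutive differences are admissible steps. -/
def brickPaths (t : Bool) (l w : ℤ) : Set (List (ℤ × ℤ)) :=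
  {v | v ≠ [] ∧ v.Nodup ∧
    (∀ p ∈ v, 0 ≤ p.1 ∧ p.1 ≤ l - 1 ∧ 0 ≤ p.2 ∧ p.2 ≤ w - 1) ∧
    (∀ p ∈ v.head?, p.1 = 0) ∧
    (∀ p ∈ v.getLast?, p.1 = l - 1) ∧
    List.Chain' (BrickStep t) v}

namespace BrickAux

lemma memLast {α : Type*} {l : List α} {a : α} (h : l.getLast? = some a) : a ∈ l := by
  obtain ⟨hne, he⟩ := List.mem_getLast?_eq_getLast (show a ∈ l.getLast? by rw [h]; rfl)
  rw [he]; exact List.getLast_mem hne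

lemma step_cases {p q : ℤ × ℤ} (h : BrickStep true p q) :
    q = (p.1 + 1, p.2) ∨
    (q = (p.1, p.2 + 1) ∧ p.1 ≠ 0 ∧ Even (p.1 + p.2)) ∨
    (q = (p.1, p.2 - 1) ∧ p.1 ≠ 0 ∧ Odd (p.1 + p.2)) := by
  simpa [BrickStep] using h

lemma step_le {p q : ℤ × ℤ} (h : BrickStep true p q) : p.1 ≤ q.1 := by
  rcases step_cases h with rfl | ⟨rfl, _, _⟩ | ⟨rfl, _, _⟩ <;> simp

lemma no_double_vert {r p q : ℤ × ℤ} (h1 : BrickStep true r p) (h2 : BrickStep true p q)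
    (hrp : p.1 = r.1) (hpq : q.1 = p.1) : q = r := by
  obtain ⟨x, a⟩ := r
  rcases step_cases h1 with rfl | ⟨rfl, _, he⟩ | ⟨rfl, _, ho⟩
  · exfalso
    have h : x + 1 = x := hrp
    omega
  · rcases step_cases h2 with rfl | ⟨rfl, _, he2⟩ | ⟨rfl, _, ho2⟩
    · simp at hpq
    · exfalso; simp only at he he2; rw [Int.even_iff] at he he2; omega
    · simp
  · rcases step_cases h2 with rfl | ⟨rfl, _, he2⟩ | ⟨rfl, _, ho2⟩
    · simp at hpq
    · simp
    · exfalso; simp only at ho ho2; rw [Int.odd_iff] at ho ho2; omega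

lemma mono : ∀ (v : List (ℤ × ℤ)), List.Chain' (BrickStep true) v →
    ∀ p ∈ v, ∀ q ∈ v.getLast?, p.1 ≤ q.1 := by
  intro v
  induction v with
  | nil => simp
  | cons a t ih =>
    intro hc p hp q hq
    cases t with
    | nil =>
      simp at hp hq; subst hp; subst hq
      exact le_rfl
    | cons b t2 =>
      unfold List.Chain' at hc; rw [List.isChain_cons_cons] at hc
      rw [List.getLast?_cons_cons] at hq
      rcases List.mem_cons.mp hp with rfl | hp2
      · exact le_trans (step_le hc.1) (ih hc.2 b List.mem_cons_self q hq)
      · exact ih hc.2 p hp2 q hq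

def E (n : ℕ) (y : ℤ) : Set (List (ℤ × ℤ)) :=
  {v | v ≠ [] ∧ v.Nodup ∧ (∀ p ∈ v, 0 ≤ p.1 ∧ p.1 ≤ (n : ℤ) ∧ 0 ≤ p.2 ∧ p.2 ≤ 2) ∧
    (∀ p ∈ v.head?, p.1 = 0) ∧ v.getLast? = some ((n : ℤ), y) ∧ List.Chain' (BrickStep true) v}

lemma mem_E_iff {n : ℕ} {y : ℤ} {v : List (ℤ × ℤ)} : v ∈ E n y ↔
    v ≠ [] ∧ v.Nodup ∧ (∀ p ∈ v, 0 ≤ p.1 ∧ p.1 ≤ (n : ℤ) ∧ 0 ≤ p.2 ∧ p.2 ≤ 2) ∧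
    (∀ p ∈ v.head?, p.1 = 0) ∧ v.getLast? = some ((n : ℤ), y) ∧
    List.Chain' (BrickStep true) v := Iff.rfl

lemma E_range {n : ℕ} {y : ℤ} {v : List (ℤ × ℤ)} (hv : v ∈ E n y) : 0 ≤ y ∧ y ≤ 2 := by
  obtain ⟨-, -, hpts, -, hlast, -⟩ := hv
  have := hpts _ (memLast hlast)
  exact ⟨this.2.2.1, this.2.2.2⟩

lemma E_empty (n : ℕ) (y : ℤ) (h : ¬(0 ≤ y ∧ y ≤ 2)) : E n y = ∅ := by
  rw [Set.eq_empty_iff_forall_notMem]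
  intro v hv
  exact h (E_range hv)

lemma E_zero (y : ℤ) (h0 : 0 ≤ y) (h2 : y ≤ 2) : E 0 y = {[((0 : ℤ), y)]} := by
  ext v
  constructor
  · rintro ⟨hne, hnd, hpts, hhd, hlast, hch⟩
    match v, hne with
    | [a], _ =>
      simp only [List.getLast?_singleton, Option.some.injEq] at hlast
      simp [hlast]
    | a :: b :: t, _ =>
      exfalso
      unfold List.Chain' at hch; rw [List.isChain_cons_cons] at hch
      have ha : a.1 = 0 := hhd a rfl
      have hb := hpts b (by simp)
      rcases step_cases hch.1 with rfl | ⟨-, h, -⟩ | ⟨-, h, -⟩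
      · simp at hb; omega
      · exact h ha
      · exact h ha
  · rintro rfl
    exact ⟨by simp, by simp, by rintro p hp; simp at hp; simp [hp]; omega,
      by simp, by simp, List.isChain_singleton _⟩

def yv (n : ℕ) (y : ℤ) : ℤ := if Even ((n : ℤ) + 1 + y) then y + 1 else y - 1

lemma yv_ne {n : ℕ} {y : ℤ} : yv n y ≠ y := by
  unfold yv; split <;> omega

lemma step_into {n : ℕ} {y : ℤ} : BrickStep true ((n : ℤ) + 1, yv n y) ((n : ℤ) + 1, y) := by
  have hn : (0 : ℤ) ≤ (n : ℤ) := Int.natCast_nonneg n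
  unfold yv
  split
  case isTrue h =>
    right; right
    refine ⟨by simp, ?_, ?_⟩
    · show (n : ℤ) + 1 ≠ 0
      omega
    · show Odd ((n : ℤ) + 1 + (y + 1))
      rw [Int.even_iff] at h; rw [Int.odd_iff]; omega
  case isFalse h =>
    right; left
    refine ⟨by simp, ?_, ?_⟩
    · show (n : ℤ) + 1 ≠ 0
      omega
    · show Even ((n : ℤ) + 1 + (y - 1))
      rw [Int.even_iff] at h ⊢; omega

/-- Appending a horizontal step. -/
lemma append_one_mem {n : ℕ} {y : ℤ} {u : List (ℤ × ℤ)} (hu : u ∈ E n y) :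
    u ++ [((n : ℤ) + 1, y)] ∈ E (n + 1) y := by
  obtain ⟨hne, hnd, hpts, hhd, hlast, hch⟩ := hu
  obtain ⟨hy0, hy2⟩ : 0 ≤ y ∧ y ≤ 2 := by
    have := hpts _ (memLast hlast); exact ⟨this.2.2.1, this.2.2.2⟩
  refine ⟨by simp, ?_, ?_, ?_, ?_, ?_⟩
  · rw [List.nodup_append]
    refine ⟨hnd, by simp, ?_⟩
    intro a ha b hb hab; subst hab
    simp at hb; subst hb
    exact absurd (hpts _ ha).2.1 (by show ¬((n : ℤ) + 1 ≤ (n : ℤ)); omega)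
  · intro p hp
    rcases List.mem_append.mp hp with h | h
    · have := hpts p h
      push_cast
      exact ⟨this.1, by omega, this.2.2.1, this.2.2.2⟩
    · simp at h; subst h
      push_cast
      refine ⟨by omega, by omega, hy0, hy2⟩
  · intro p hp
    rw [List.head?_append_of_ne_nil _ hne] at hp
    exact hhd p hp
  · rw [List.getLast?_concat]
    push_cast
    rfl
  · unfold List.Chain'; rw [List.isChain_append]
    refine ⟨hch, by simp, ?_⟩
    intro x hx y' hy'
    simp only [Option.mem_def] at hx hy'
    rw [hlast] at hx
    injection hx with hx; subst hx
    injection hy' with hy'; subst hy'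
    left; simp

/-- Appending a horizontal step then a vertical step. -/
lemma append_two_mem {n : ℕ} {y : ℤ} {u : List (ℤ × ℤ)} (hy0 : 0 ≤ y) (hy2 : y ≤ 2)
    (hu : u ∈ E n (yv n y)) :
    u ++ [((n : ℤ) + 1, yv n y), ((n : ℤ) + 1, y)] ∈ E (n + 1) y := by
  obtain ⟨hne, hnd, hpts, hhd, hlast, hch⟩ := hu
  obtain ⟨hz0, hz2⟩ : 0 ≤ yv n y ∧ yv n y ≤ 2 := by
    have := hpts _ (memLast hlast); exact ⟨this.2.2.1, this.2.2.2⟩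
  refine ⟨by simp, ?_, ?_, ?_, ?_, ?_⟩
  · rw [List.nodup_append]
    refine ⟨hnd, by simp [yv_ne], ?_⟩
    intro a ha b hb hab; subst hab
    simp at hb
    rcases hb with hb | hb <;>
      (subst hb; exact absurd (hpts _ ha).2.1 (by show ¬((n : ℤ) + 1 ≤ (n : ℤ)); omega))
  · intro p hp
    rcases List.mem_append.mp hp with h | h
    · have := hpts p h
      push_cast
      exact ⟨this.1, by omega, this.2.2.1, this.2.2.2⟩
    · simp at h
      rcases h with h | h <;> (subst h; push_cast; refine ⟨by omega, by omega, by omega, by omega⟩)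
  · intro p hp
    rw [List.head?_append_of_ne_nil _ hne] at hp
    exact hhd p hp
  · rw [show u ++ [((n : ℤ) + 1, yv n y), ((n : ℤ) + 1, y)]
        = (u ++ [((n : ℤ) + 1, yv n y)]) ++ [((n : ℤ) + 1, y)] by simp,
      List.getLast?_concat]
    push_cast
    rfl
  · unfold List.Chain'; rw [List.isChain_append]
    refine ⟨hch, ?_, ?_⟩
    · rw [List.isChain_cons_cons]
      exact ⟨step_into, by simp⟩
    · intro x hx y' hy'
      simp only [Option.mem_def] at hx hy'
      rw [hlast] at hx
      injection hx with hx; subst hx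
      injection hy' with hy'; subst hy'
      left; simp

lemma E_succ (n : ℕ) (y : ℤ) (hy0 : 0 ≤ y) (hy2 : y ≤ 2) :
    E (n + 1) y = (fun v => v ++ [((n : ℤ) + 1, y)]) '' E n y ∪
      (fun v => v ++ [((n : ℤ) + 1, yv n y), ((n : ℤ) + 1, y)]) '' E n (yv n y) := by
  apply Set.Subset.antisymm
  · rintro v ⟨hne, hnd, hpts, hhd, hlast, hch⟩
    have hc : ((n + 1 : ℕ) : ℤ) = (n : ℤ) + 1 := by push_cast; ring
    rw [hc] at hlast hpts
    rcases List.eq_nil_or_concat v with rfl | ⟨u, q, rfl⟩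
    · exact absurd rfl hne
    simp only [List.concat_eq_append] at *
    rw [List.getLast?_concat] at hlast
    injection hlast with hlast
    subst hlast
    have hune : u ≠ [] := by
      rintro rfl
      have h0 : (n : ℤ) + 1 = 0 := hhd _ rfl
      omega
    rcases List.eq_nil_or_concat u with rfl | ⟨w, p, rfl⟩
    · exact absurd rfl hune
    simp only [List.concat_eq_append] at *
    have hchain2 := List.isChain_append.mp hch
    have hstep : BrickStep true p ((n : ℤ) + 1, y) :=
      hchain2.2.2 p (by rw [List.getLast?_concat]; rfl) _ rfl
    rcases step_cases hstep with heq | ⟨heq, hp0, hpar⟩ | ⟨heq, hp0, hpar⟩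
    · -- horizontal last step
      left
      have hp : p = ((n : ℤ), y) := by
        obtain ⟨p1, p2⟩ := p
        rw [Prod.ext_iff] at heq ⊢
        simp at heq ⊢
        omega
      subst hp
      refine ⟨w ++ [((n : ℤ), y)], ⟨by simp, (List.nodup_append.mp hnd).1, ?_, ?_,
        List.getLast?_concat, hchain2.1⟩, rfl⟩
      · intro r hr
        have h1 := hpts r (List.mem_append_left _ hr)
        have h2 := mono _ hchain2.1 r hr ((n : ℤ), y) (by rw [List.getLast?_concat]; rfl)
        simp only at h2
        exact ⟨h1.1, h2, h1.2.2.1, h1.2.2.2⟩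
      · intro r hr
        apply hhd
        rwa [List.head?_append_of_ne_nil _ hune]
    · -- vertical up last step: came from y - 1
      right
      obtain ⟨p1, p2⟩ := p
      obtain ⟨rfl, rfl⟩ : p1 = (n : ℤ) + 1 ∧ p2 = y - 1 := by
        rw [Prod.ext_iff] at heq; simp at heq; omega
      simp only at hpar hp0
      have hyv : yv n y = y - 1 := by
        unfold yv
        rw [if_neg]
        rw [Int.even_iff] at hpar ⊢
        omega
      have hwne : w ≠ [] := by
        rintro rfl
        have h0 : (n : ℤ) + 1 = 0 := hhd _ rfl
        omega
      rcases List.eq_nil_or_concat w with rfl | ⟨w', r, rfl⟩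
      · exact absurd rfl hwne
      simp only [List.concat_eq_append] at *
      have hch1 := hchain2.1
      have hchain3 := List.isChain_append.mp hch1
      have hstep2 : BrickStep true r ((n : ℤ) + 1, y - 1) :=
        hchain3.2.2 r (by rw [List.getLast?_concat]; rfl) _ rfl
      by_cases hr1 : r.1 = (n : ℤ) + 1
      · exfalso
        have hqr := no_double_vert hstep2 hstep (by simp [hr1]) (by simp)
        have hdisj := (List.nodup_append.mp hnd).2.2
        have hmem : ((n : ℤ) + 1, y) ∈ w' ++ [r] ++ [((n : ℤ) + 1, y - 1)] := by
          rw [hqr]; simp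
        exact hdisj _ hmem _ (by simp) rfl
      · have hr : r = ((n : ℤ), y - 1) := by
          obtain ⟨r1, r2⟩ := r
          rcases step_cases hstep2 with heq2 | ⟨heq2, -, -⟩ | ⟨heq2, -, -⟩ <;>
            (rw [Prod.ext_iff] at heq2; simp at heq2 hr1 ⊢; omega)
        subst hr
        rw [hyv]
        refine ⟨w' ++ [((n : ℤ), y - 1)], ⟨by simp, (List.nodup_append.mp (List.nodup_append.mp hnd).1).1,
          ?_, ?_, List.getLast?_concat, hchain3.1⟩, by simp⟩
        · intro s hs
          have h1 := hpts s (List.mem_append_left _ (List.mem_append_left _ hs))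
          have h2 := mono _ hchain3.1 s hs ((n : ℤ), y - 1) (by rw [List.getLast?_concat]; rfl)
          simp only at h2
          exact ⟨h1.1, h2, h1.2.2.1, h1.2.2.2⟩
        · intro s hs
          apply hhd
          rwa [List.head?_append_of_ne_nil _ hune, List.head?_append_of_ne_nil _ hwne]
    · -- vertical down last step: came from y + 1
      right
      obtain ⟨p1, p2⟩ := p
      obtain ⟨rfl, rfl⟩ : p1 = (n : ℤ) + 1 ∧ p2 = y + 1 := by
        rw [Prod.ext_iff] at heq; simp at heq; omega
      simp only at hpar hp0
      have hyv : yv n y = y + 1 := by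
        unfold yv
        rw [if_pos]
        rw [Int.odd_iff] at hpar
        rw [Int.even_iff]
        omega
      have hwne : w ≠ [] := by
        rintro rfl
        have h0 : (n : ℤ) + 1 = 0 := hhd _ rfl
        omega
      rcases List.eq_nil_or_concat w with rfl | ⟨w', r, rfl⟩
      · exact absurd rfl hwne
      simp only [List.concat_eq_append] at *
      have hch1 := hchain2.1
      have hchain3 := List.isChain_append.mp hch1
      have hstep2 : BrickStep true r ((n : ℤ) + 1, y + 1) :=
        hchain3.2.2 r (by rw [List.getLast?_concat]; rfl) _ rfl
      by_cases hr1 : r.1 = (n : ℤ) + 1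
      · exfalso
        have hqr := no_double_vert hstep2 hstep (by simp [hr1]) (by simp)
        have hdisj := (List.nodup_append.mp hnd).2.2
        have hmem : ((n : ℤ) + 1, y) ∈ w' ++ [r] ++ [((n : ℤ) + 1, y + 1)] := by
          rw [hqr]; simp
        exact hdisj _ hmem _ (by simp) rfl
      · have hr : r = ((n : ℤ), y + 1) := by
          obtain ⟨r1, r2⟩ := r
          rcases step_cases hstep2 with heq2 | ⟨heq2, -, -⟩ | ⟨heq2, -, -⟩ <;>
            (rw [Prod.ext_iff] at heq2; simp at heq2 hr1 ⊢; omega)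
        subst hr
        rw [hyv]
        refine ⟨w' ++ [((n : ℤ), y + 1)], ⟨by simp, (List.nodup_append.mp (List.nodup_append.mp hnd).1).1,
          ?_, ?_, List.getLast?_concat, hchain3.1⟩, by simp⟩
        · intro s hs
          have h1 := hpts s (List.mem_append_left _ (List.mem_append_left _ hs))
          have h2 := mono _ hchain3.1 s hs ((n : ℤ), y + 1) (by rw [List.getLast?_concat]; rfl)
          simp only at h2
          exact ⟨h1.1, h2, h1.2.2.1, h1.2.2.2⟩
        · intro s hs
          apply hhd
          rwa [List.head?_append_of_ne_nil _ hune, List.head?_append_of_ne_nil _ hwne]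
  · rintro v (⟨u, hu, rfl⟩ | ⟨u, hu, rfl⟩)
    · exact append_one_mem hu
    · exact append_two_mem hy0 hy2 hu

def g : ℕ → ℤ → ℕ
  | 0, y => if 0 ≤ y ∧ y ≤ 2 then 1 else 0
  | n + 1, y => if 0 ≤ y ∧ y ≤ 2 then g n y + g n (yv n y) else 0

lemma g_out (n : ℕ) (y : ℤ) (h : ¬(0 ≤ y ∧ y ≤ 2)) : g n y = 0 := by
  cases n <;> simp [g, h]

lemma E_card : ∀ (n : ℕ) (y : ℤ), (E n y).Finite ∧ (E n y).ncard = g n y := by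
  intro n
  induction n with
  | zero =>
    intro y
    by_cases h : 0 ≤ y ∧ y ≤ 2
    · rw [E_zero y h.1 h.2]
      simp [g, h]
    · rw [E_empty 0 y h]
      simp [g, h]
  | succ n ih =>
    intro y
    by_cases h : 0 ≤ y ∧ y ≤ 2
    · rw [E_succ n y h.1 h.2]
      have hA := ih y
      have hB := ih (yv n y)
      have finA := hA.1.image (fun v => v ++ [((n : ℤ) + 1, y)])
      have finB := hB.1.image (fun v => v ++ [((n : ℤ) + 1, yv n y), ((n : ℤ) + 1, y)])
      have hdisj : Disjoint ((fun v => v ++ [((n : ℤ) + 1, y)]) '' E n y)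
          ((fun v => v ++ [((n : ℤ) + 1, yv n y), ((n : ℤ) + 1, y)]) '' E n (yv n y)) := by
        rw [Set.disjoint_left]
        rintro w ⟨u, hu, rfl⟩ ⟨u', hu', heq⟩
        have h1 : u' ++ [((n : ℤ) + 1, yv n y)] = u := by
          have h2 := congrArg List.dropLast heq
          dsimp only at h2
          rwa [show u' ++ [((n : ℤ) + 1, yv n y), ((n : ℤ) + 1, y)]
              = (u' ++ [((n : ℤ) + 1, yv n y)]) ++ [((n : ℤ) + 1, y)] by simp,
            List.dropLast_concat, List.dropLast_concat] at h2
        have h2 := hu.2.2.2.2.1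
        rw [← h1, List.getLast?_concat] at h2
        injection h2 with h2
        rw [Prod.ext_iff] at h2
        have h3 := h2.1
        simp at h3
      refine ⟨finA.union finB, ?_⟩
      rw [Set.ncard_union_eq hdisj finA finB,
        Set.ncard_image_of_injective _ (List.append_left_injective _),
        Set.ncard_image_of_injective _ (List.append_left_injective _), hA.2, hB.2]
      simp [g, h]
    · rw [E_empty _ y h]
      simp [g_out _ y h]

lemma gvals : ∀ n : ℕ,
    (n % 2 = 0 → g n 0 = Nat.fib (n + 2) ∧ g n 1 = Nat.fib (n + 2) ∧ g n 2 = Nat.fib (n + 1)) ∧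
    (n % 2 = 1 → g n 0 = Nat.fib (n + 1) ∧ g n 1 = Nat.fib (n + 2) ∧ g n 2 = Nat.fib (n + 2)) := by
  intro n
  induction n with
  | zero => simp [g]
  | succ n ih =>
    have hfib : Nat.fib (n + 3) = Nat.fib (n + 1) + Nat.fib (n + 2) := by
      have := Nat.fib_add_two (n := n + 1)
      simpa [show n + 1 + 2 = n + 3 by omega, show n + 1 + 1 = n + 2 by omega] using this
    constructor
    · intro he
      have hn : n % 2 = 1 := by omega
      obtain ⟨h0, h1, h2⟩ := ih.2 hn
      have hy0 : yv n 0 = 1 := by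
        unfold yv
        rw [if_pos (by rw [Int.even_iff]; omega)]
        norm_num
      have hy1 : yv n 1 = 0 := by
        unfold yv
        rw [if_neg (by rw [Int.even_iff]; omega)]
        norm_num
      have hy2 : yv n 2 = 3 := by
        unfold yv
        rw [if_pos (by rw [Int.even_iff]; omega)]
        norm_num
      refine ⟨?_, ?_, ?_⟩ <;>
        simp only [g, hy0, hy1, hy2, if_pos (by norm_num : (0:ℤ) ≤ 0 ∧ (0:ℤ) ≤ 2),
          if_pos (by norm_num : (0:ℤ) ≤ 1 ∧ (1:ℤ) ≤ 2), if_pos (by norm_num : (0:ℤ) ≤ 2 ∧ (2:ℤ) ≤ 2)]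
      · rw [h0, h1, show n + 1 + 2 = n + 3 by omega, hfib]
      · rw [h1, h0, show n + 1 + 2 = n + 3 by omega, hfib]
        omega
      · rw [h2, g_out n 3 (by norm_num), show n + 1 + 1 = n + 2 by omega]
        omega
    · intro ho
      have hn : n % 2 = 0 := by omega
      obtain ⟨h0, h1, h2⟩ := ih.1 hn
      have hy0 : yv n 0 = -1 := by
        unfold yv
        rw [if_neg (by rw [Int.even_iff]; omega)]
        norm_num
      have hy1 : yv n 1 = 2 := by
        unfold yv
        rw [if_pos (by rw [Int.even_iff]; omega)]
        norm_num
      have hy2 : yv n 2 = 1 := by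
        unfold yv
        rw [if_neg (by rw [Int.even_iff]; omega)]
        norm_num
      refine ⟨?_, ?_, ?_⟩ <;>
        simp only [g, hy0, hy1, hy2, if_pos (by norm_num : (0:ℤ) ≤ 0 ∧ (0:ℤ) ≤ 2),
          if_pos (by norm_num : (0:ℤ) ≤ 1 ∧ (1:ℤ) ≤ 2), if_pos (by norm_num : (0:ℤ) ≤ 2 ∧ (2:ℤ) ≤ 2)]
      · rw [h0, g_out n (-1) (by norm_num), show n + 1 + 1 = n + 2 by omega]
        omega
      · rw [h1, h2, show n + 1 + 2 = n + 3 by omega, hfib]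
        omega
      · rw [h2, h1, show n + 1 + 2 = n + 3 by omega, hfib]

lemma g_sum (n : ℕ) : g n 0 + g n 1 + g n 2 = Nat.fib (n + 4) := by
  have hf3 : Nat.fib (n + 3) = Nat.fib (n + 1) + Nat.fib (n + 2) := by
    have := Nat.fib_add_two (n := n + 1)
    simpa [show n + 1 + 2 = n + 3 by omega, show n + 1 + 1 = n + 2 by omega] using this
  have hf4 : Nat.fib (n + 4) = Nat.fib (n + 2) + Nat.fib (n + 3) := by
    have := Nat.fib_add_two (n := n + 2)
    simpa [show n + 2 + 2 = n + 4 by omega, show n + 2 + 1 = n + 3 by omega] using this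
  rcases Nat.even_or_odd n with he | ho
  · obtain ⟨h0, h1, h2⟩ := (gvals n).1 (Nat.even_iff.mp he)
    omega
  · obtain ⟨h0, h1, h2⟩ := (gvals n).2 (Nat.odd_iff.mp ho)
    omega

lemma E_disjoint (m : ℕ) (y z : ℤ) (h : y ≠ z) : Disjoint (E m y) (E m z) := by
  rw [Set.disjoint_left]
  rintro v hv hw
  have h1 := hv.2.2.2.2.1
  have h2 := hw.2.2.2.2.1
  rw [h1] at h2
  injection h2 with h2
  rw [Prod.ext_iff] at h2
  exact h h2.2

lemma E_subset_brick (m : ℕ) (y : ℤ) :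
    E m y ⊆ brickPaths true ((m + 1 : ℕ) : ℤ) 3 := by
  rintro v ⟨hne, hnd, hpts, hhd, hlast, hch⟩
  refine ⟨hne, hnd, ?_, hhd, ?_, hch⟩
  · intro p hp
    have := hpts p hp
    push_cast
    exact ⟨this.1, by omega, this.2.2.1, by omega⟩
  · intro p hp
    simp only [Option.mem_def] at hp
    rw [hlast] at hp
    injection hp with hp
    subst hp
    show (↑m : ℤ) = ((m + 1 : ℕ) : ℤ) - 1
    push_cast; ring

lemma brick_eq_union (m : ℕ) :
    brickPaths true ((m + 1 : ℕ) : ℤ) 3 = E m 0 ∪ E m 1 ∪ E m 2 := by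
  apply Set.Subset.antisymm
  · rintro v ⟨hne, hnd, hpts, hhd, hlast, hch⟩
    rcases List.eq_nil_or_concat v with rfl | ⟨u, q, rfl⟩
    · exact absurd rfl hne
    simp only [List.concat_eq_append] at *
    have hq1 : q.1 = (m : ℤ) := by
      have := hlast q (by rw [List.getLast?_concat]; rfl)
      push_cast at this ⊢
      omega
    have hmem : ∀ z : ℤ, q.2 = z → u ++ [q] ∈ E m z := by
      intro z hz
      refine ⟨by simp, hnd, ?_, hhd, ?_, hch⟩
      · intro p hp
        have h1 := hpts p hp
        have h2 := mono _ hch p hp q (by rw [List.getLast?_concat]; rfl)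
        exact ⟨h1.1, by omega, h1.2.2.1, by omega⟩
      · rw [List.getLast?_concat]
        congr 1
        rw [Prod.ext_iff]
        exact ⟨hq1, hz⟩
    have hq2 : q.2 = 0 ∨ q.2 = 1 ∨ q.2 = 2 := by
      have := hpts q (by simp)
      omega
    rcases hq2 with h | h | h
    · exact Or.inl (Or.inl (hmem 0 h))
    · exact Or.inl (Or.inr (hmem 1 h))
    · exact Or.inr (hmem 2 h)
  · rintro v ((h | h) | h) <;> exact E_subset_brick m _ h

end BrickAux

/-- For every integer `l ≥ 2`, the number of brick-wall lattice paths of the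
first type in the rectangle `{0,…,l−1} × {0,1,2}` equals the Fibonacci number
`F (l+3)`. -/
theorem brickPaths_width_three_eq_fib (l : ℕ) (hl : 2 ≤ l) :
    (brickPaths true (l : ℤ) 3).ncard = Nat.fib (l + 3) := by
  obtain ⟨m, rfl⟩ : ∃ m, l = m + 1 := ⟨l - 1, by omega⟩
  rw [BrickAux.brick_eq_union m]
  have h0 := BrickAux.E_card m 0
  have h1 := BrickAux.E_card m 1
  have h2 := BrickAux.E_card m 2
  have dA : Disjoint (BrickAux.E m 0 ∪ BrickAux.E m 1) (BrickAux.E m 2) :=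
    Disjoint.union_left (BrickAux.E_disjoint m 0 2 (by norm_num))
      (BrickAux.E_disjoint m 1 2 (by norm_num))
  rw [Set.ncard_union_eq dA (h0.1.union h1.1) h2.1,
    Set.ncard_union_eq (BrickAux.E_disjoint m 0 1 (by norm_num)) h0.1 h1.1,
    h0.2, h1.2, h2.2, show m + 1 + 3 = m + 4 by omega]
  exact BrickAux.g_sum m
end

section
/- For every integer k ≥ 1, the number of brick-wall lattice paths of the second type in the rectangle R = {0,…,2k} × {0,1,2,3} (width w = 4, odd length l = 2k+1) equals 4·3^k, i.e. B^{(2)}_{2k+1,4} = 4·3^k. -/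
set_option linter.unreachableTactic false
set_option linter.unusedTactic false
set_option linter.unnecessarySeqFocus false

/-- Partial paths that end exactly at the point `(x, y)`. -/
def BWA (x y : ℤ) : Set (List (ℤ × ℤ)) :=
  {v | v ≠ [] ∧ v.Nodup ∧
    (∀ p ∈ v, 0 ≤ p.1 ∧ p.1 ≤ x ∧ 0 ≤ p.2 ∧ p.2 ≤ 3) ∧
    (∀ p ∈ v.head?, p.1 = 0) ∧
    v.getLast? = some (x, y) ∧
    List.Chain' (BrickStep false) v}

lemma brickStep_false_iff (p q : ℤ × ℤ) :
    BrickStep false p q ↔ q = (p.1 + 1, p.2) ∨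
      (q = (p.1, p.2 + 1) ∧ p.1 ≠ 0 ∧ Odd (p.1 + p.2)) ∨
      (q = (p.1, p.2 - 1) ∧ p.1 ≠ 0 ∧ Even (p.1 + p.2)) := by
  simp [BrickStep]

lemma bw_le_getLast : ∀ (v : List (ℤ × ℤ)) (hne : v ≠ []),
    List.Chain' (BrickStep false) v → ∀ p ∈ v, p.1 ≤ (v.getLast hne).1
  | [], hne, _ => absurd rfl hne
  | [a], _, _ => by simp
  | a :: b :: t, _, h => by
    simp only [List.Chain', List.isChain_cons_cons] at h
    have hab : a.1 ≤ b.1 := by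
      rcases (brickStep_false_iff a b).1 h.1 with h1 | h1 | h1
      · rw [h1]; simp
      · rw [h1.1]
      · rw [h1.1]
    have hI := bw_le_getLast (b :: t) (by simp) h.2
    intro p hp
    rw [List.getLast_cons (by simp : b :: t ≠ [])]
    rcases List.mem_cons.1 hp with rfl | hp
    · exact le_trans hab (hI b (by simp))
    · exact hI p hp

lemma BWA_out {x y : ℤ} (hy : y < 0 ∨ 3 < y) : BWA x y = ∅ := by
  ext v
  simp only [Set.mem_empty_iff_false, iff_false]
  rintro ⟨hne, -, hbd, -, hlast, -⟩
  have hmem : (x, y) ∈ v := by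
    have h1 := List.getLast?_eq_getLast (l := v) hne
    rw [hlast] at h1
    have : v.getLast hne = (x, y) := by injection h1.symm
    exact this ▸ List.getLast_mem hne
  have := hbd _ hmem
  simp at this
  omega

lemma BWA_zero {y : ℤ} (h0 : 0 ≤ y) (h3 : y ≤ 3) : BWA 0 y = {[((0 : ℤ), y)]} := by
  ext v
  constructor
  · rintro ⟨hne, hnd, hbd, hhd, hlast, hch⟩
    match v with
    | [a] =>
      have h1 := List.getLast?_eq_getLast (l := [a]) (by simp)
      rw [hlast] at h1
      have : a = ((0 : ℤ), y) := by
        have : [a].getLast (by simp) = (0, y) := by injection h1.symm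
        simpa using this
      simp [this]
    | a :: b :: t =>
      exfalso
      simp only [List.Chain', List.isChain_cons_cons] at hch
      have ha := hbd a (by simp)
      have ha1 : a.1 = 0 := le_antisymm ha.2.1 ha.1
      rcases (brickStep_false_iff a b).1 hch.1 with h1 | h1 | h1
      · have hb := hbd b (by simp)
        rw [h1] at hb; simp [ha1] at hb
      · exact h1.2.1 ha1
      · exact h1.2.1 ha1
  · rintro rfl
    refine ⟨by simp, by simp, by simp [h0, h3], by simp, by simp, List.isChain_singleton _⟩

lemma BWA_finite_zero (y : ℤ) : (BWA 0 y).Finite := by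
  rcases le_or_gt 0 y with h0 | h0
  · rcases le_or_gt y 3 with h3 | h3
    · rw [BWA_zero h0 h3]; exact Set.finite_singleton _
    · rw [BWA_out (Or.inr h3)]; exact Set.finite_empty
  · rw [BWA_out (Or.inl h0)]; exact Set.finite_empty
lemma bw_decompose {x y : ℤ} (hx : 0 ≤ x) {v : List (ℤ × ℤ)} (hv : v ∈ BWA (x + 1) y) :
    (∃ p ∈ BWA x y, v = p ++ [(x + 1, y)]) ∨
    (Odd (x + y) ∧ ∃ p ∈ BWA x (y - 1), v = p ++ [(x + 1, y - 1), (x + 1, y)]) ∨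
    (Even (x + y) ∧ ∃ p ∈ BWA x (y + 1), v = p ++ [(x + 1, y + 1), (x + 1, y)]) := by
  obtain ⟨hne, hnd, hbd, hhd, hlast, hch⟩ := hv
  have hgl : v.getLast hne = (x + 1, y) := by
    have h1 := List.getLast?_eq_getLast (l := v) hne
    rw [hlast] at h1
    exact (Option.some.inj h1).symm
  have hv' : v.dropLast ++ [(x + 1, y)] = v := by
    rw [← hgl]; exact List.dropLast_append_getLast hne
  set P := v.dropLast with hPdef
  have hPne : P ≠ [] := by
    intro h
    have hv1 : v = [(x + 1, y)] := by rw [← hv', h]; simp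
    have := hhd (x + 1, y) (by rw [hv1]; simp)
    simp at this; omega
  rw [← hv'] at hch hnd
  obtain ⟨hchP, -, hstep⟩ := List.isChain_append.1 hch
  set q := P.getLast hPne with hqdef
  have hq : BrickStep false q (x + 1, y) :=
    hstep q (by simp [List.getLast?_eq_getLast (l := P) hPne, hqdef]) (x + 1, y) (by simp)
  have hndP : P.Nodup := (List.nodup_append.1 hnd).1
  have hvhd : v.head? = P.head? := by
    rw [← hv', List.head?_append, List.head?_eq_head hPne]; rfl
  have hhdP : ∀ p ∈ P.head?, p.1 = 0 := by rw [← hvhd]; exact hhd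
  have hmemP : ∀ p ∈ P, p ∈ v := fun p hp => by
    rw [← hv']; exact List.mem_append_left _ hp
  rcases (brickStep_false_iff q (x + 1, y)).1 hq with h1 | h1 | h1
  · -- horizontal step into the last point
    rw [Prod.ext_iff] at h1; simp at h1
    have hq1 : q.1 = x := by omega
    have hq2 : q.2 = y := h1.2.symm
    refine Or.inl ⟨P, ⟨hPne, hndP, ?_, hhdP, ?_, hchP⟩, hv'.symm⟩
    · intro p hp
      have h := hbd p (hmemP p hp)
      have hle := bw_le_getLast P hPne hchP p hp
      rw [← hqdef, hq1] at hle
      exact ⟨h.1, hle, h.2.2⟩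
    · rw [List.getLast?_eq_getLast (l := P) hPne, ← hqdef]
      rw [show q = (x, y) from Prod.ext hq1 hq2]
  · -- last step is an up step inside column x+1
    rw [Prod.ext_iff] at h1
    obtain ⟨⟨h1a, h1b⟩, -, hodd⟩ := h1
    simp at h1a h1b
    have hq1 : q.1 = x + 1 := h1a.symm
    have hq2 : q.2 = y - 1 := by omega
    have hoddxy : Odd (x + y) := by
      obtain ⟨i, hi⟩ := hodd; exact ⟨i, by omega⟩
    have hP' : P.dropLast ++ [q] = P := by
      rw [hqdef]; exact List.dropLast_append_getLast hPne
    set Q := P.dropLast with hQdef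
    have hQne : Q ≠ [] := by
      intro h
      have hP1 : P = [q] := by rw [← hP', h]; simp
      have := hhdP q (by rw [hP1]; simp)
      omega
    rw [← hP'] at hchP
    obtain ⟨hchQ, -, hstep2⟩ := List.isChain_append.1 hchP
    set r := Q.getLast hQne with hrdef
    have hr : BrickStep false r q :=
      hstep2 r (by simp [List.getLast?_eq_getLast (l := Q) hQne, hrdef]) q (by simp)
    rcases (brickStep_false_iff r q).1 hr with h2 | h2 | h2
    · -- horizontal then up : the good case
      rw [Prod.ext_iff] at h2; simp at h2
      have hr1 : r.1 = x := by omega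
      have hr2 : r.2 = y - 1 := by omega
      refine Or.inr (Or.inl ⟨hoddxy, Q, ⟨hQne, ?_, ?_, ?_, ?_, hchQ⟩, ?_⟩)
      · exact (List.nodup_append.1 (List.Nodup.sublist (by rw [hP'] ; exact List.sublist_append_left _ _) hnd)).1
      · intro p hp
        have hpP : p ∈ P := by rw [← hP']; exact List.mem_append_left _ hp
        have h := hbd p (hmemP p hpP)
        have hle := bw_le_getLast Q hQne hchQ p hp
        rw [← hrdef, hr1] at hle
        exact ⟨h.1, hle, h.2.2⟩
      · intro p hp
        apply hhdP
        rw [← hP', List.head?_append, List.head?_eq_head hQne]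
        rw [List.head?_eq_head hQne] at hp
        exact hp
      · rw [List.getLast?_eq_getLast (l := Q) hQne, ← hrdef]
        rw [show r = (x, y - 1) from Prod.ext hr1 hr2]
      · rw [← hv', ← hP', List.append_assoc]
        congr 1
        rw [show q = (x + 1, y - 1) from Prod.ext hq1 hq2]
        rfl
    · -- up then up : parity contradiction
      exfalso
      rw [Prod.ext_iff] at h2
      obtain ⟨⟨h2a, h2b⟩, -, hodd2⟩ := h2
      obtain ⟨i, hi⟩ := hodd
      obtain ⟨j, hj⟩ := hodd2
      omega
    · -- down then up : revisits the last point
      exfalso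
      rw [Prod.ext_iff] at h2
      obtain ⟨⟨h2a, h2b⟩, -, -⟩ := h2
      have hrc : r = (x + 1, y) := Prod.ext (by omega) (by omega)
      have hdisj := (List.nodup_append'.1 (by rw [← hP', List.append_assoc] at hnd; simpa using hnd)).2.2
      exact hdisj (hrdef ▸ List.getLast_mem hQne) (by rw [hrc]; simp)
  · -- last step is a down step inside column x+1
    rw [Prod.ext_iff] at h1
    obtain ⟨⟨h1a, h1b⟩, -, heven⟩ := h1
    simp at h1a h1b
    have hq1 : q.1 = x + 1 := h1a.symm
    have hq2 : q.2 = y + 1 := by omega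
    have hevenxy : Even (x + y) := by
      obtain ⟨i, hi⟩ := heven; exact ⟨i - 1, by omega⟩
    have hP' : P.dropLast ++ [q] = P := by
      rw [hqdef]; exact List.dropLast_append_getLast hPne
    set Q := P.dropLast with hQdef
    have hQne : Q ≠ [] := by
      intro h
      have hP1 : P = [q] := by rw [← hP', h]; simp
      have := hhdP q (by rw [hP1]; simp)
      omega
    rw [← hP'] at hchP
    obtain ⟨hchQ, -, hstep2⟩ := List.isChain_append.1 hchP
    set r := Q.getLast hQne with hrdef
    have hr : BrickStep false r q :=
      hstep2 r (by simp [List.getLast?_eq_getLast (l := Q) hQne, hrdef]) q (by simp)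
    rcases (brickStep_false_iff r q).1 hr with h2 | h2 | h2
    · -- horizontal then down : the good case
      rw [Prod.ext_iff] at h2; simp at h2
      have hr1 : r.1 = x := by omega
      have hr2 : r.2 = y + 1 := by omega
      refine Or.inr (Or.inr ⟨hevenxy, Q, ⟨hQne, ?_, ?_, ?_, ?_, hchQ⟩, ?_⟩)
      · exact (List.nodup_append.1 (List.Nodup.sublist (by rw [hP'] ; exact List.sublist_append_left _ _) hnd)).1
      · intro p hp
        have hpP : p ∈ P := by rw [← hP']; exact List.mem_append_left _ hp
        have h := hbd p (hmemP p hpP)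
        have hle := bw_le_getLast Q hQne hchQ p hp
        rw [← hrdef, hr1] at hle
        exact ⟨h.1, hle, h.2.2⟩
      · intro p hp
        apply hhdP
        rw [← hP', List.head?_append, List.head?_eq_head hQne]
        rw [List.head?_eq_head hQne] at hp
        exact hp
      · rw [List.getLast?_eq_getLast (l := Q) hQne, ← hrdef]
        rw [show r = (x, y + 1) from Prod.ext hr1 hr2]
      · rw [← hv', ← hP', List.append_assoc]
        congr 1
        rw [show q = (x + 1, y + 1) from Prod.ext hq1 hq2]
        rfl
    · -- up then down : revisits the last point
      exfalso
      rw [Prod.ext_iff] at h2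
      obtain ⟨⟨h2a, h2b⟩, -, -⟩ := h2
      have hrc : r = (x + 1, y) := Prod.ext (by omega) (by omega)
      have hdisj := (List.nodup_append'.1 (by rw [← hP', List.append_assoc] at hnd; simpa using hnd)).2.2
      exact hdisj (hrdef ▸ List.getLast_mem hQne) (by rw [hrc]; simp)
    · -- down then down : parity contradiction
      exfalso
      rw [Prod.ext_iff] at h2
      obtain ⟨⟨h2a, h2b⟩, -, heven2⟩ := h2
      obtain ⟨i, hi⟩ := heven
      obtain ⟨j, hj⟩ := heven2
      omega
lemma bw_append1 {x y : ℤ} (hx : 0 ≤ x) (h0 : 0 ≤ y) (h3 : y ≤ 3) {p : List (ℤ × ℤ)}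
    (hp : p ∈ BWA x y) : p ++ [(x + 1, y)] ∈ BWA (x + 1) y := by
  obtain ⟨hne, hnd, hbd, hhd, hlast, hch⟩ := hp
  refine ⟨by simp, ?_, ?_, ?_, by simp, ?_⟩
  · rw [List.nodup_append']
    refine ⟨hnd, by simp, ?_⟩
    intro a ha hb
    simp at hb
    have := hbd a ha
    rw [hb] at this
    simp at this
    try omega
  · intro q hq
    rcases List.mem_append.1 hq with hq | hq
    · have := hbd q hq
      exact ⟨this.1, by omega, this.2.2⟩
    · simp at hq
      rw [hq]
      exact ⟨by omega, by omega, h0, h3⟩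
  · intro q hq
    apply hhd
    rw [List.head?_append, List.head?_eq_head hne] at hq
    rwa [List.head?_eq_head hne]
  · simp only [List.Chain']; rw [List.isChain_append]
    refine ⟨hch, by simp, ?_⟩
    intro a ha b hb
    rw [hlast] at ha
    simp at ha hb
    rw [← ha, ← hb, brickStep_false_iff]
    left; rfl

lemma bw_append_up {x y : ℤ} (hx : 0 ≤ x) (h1 : 1 ≤ y) (h3 : y ≤ 3) (hpar : Odd (x + y))
    {p : List (ℤ × ℤ)} (hp : p ∈ BWA x (y - 1)) :
    p ++ [(x + 1, y - 1), (x + 1, y)] ∈ BWA (x + 1) y := by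
  obtain ⟨hne, hnd, hbd, hhd, hlast, hch⟩ := hp
  refine ⟨by simp, ?_, ?_, ?_, ?_, ?_⟩
  · rw [List.nodup_append']
    refine ⟨hnd, by simp <;> omega, ?_⟩
    intro a ha hb
    simp at hb
    have := hbd a ha
    rcases hb with hb | hb <;> (rw [hb] at this; simp at this; try omega)
  · intro q hq
    rcases List.mem_append.1 hq with hq | hq
    · have := hbd q hq
      exact ⟨this.1, by omega, this.2.2⟩
    · simp at hq
      rcases hq with hq | hq <;> (rw [hq]; refine ⟨by omega, by omega, by omega, by omega⟩)
  · intro q hq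
    apply hhd
    rw [List.head?_append, List.head?_eq_head hne] at hq
    rwa [List.head?_eq_head hne]
  · rw [show [(x + 1, y - 1), (x + 1, y)] = [(x + 1, y - 1)] ++ [(x + 1, y)] from rfl,
      ← List.append_assoc, List.getLast?_concat]
  · simp only [List.Chain']; rw [List.isChain_append]
    refine ⟨hch, ?_, ?_⟩
    · rw [List.isChain_cons_cons]
      refine ⟨?_, by simp⟩
      rw [brickStep_false_iff]
      right; left
      refine ⟨by simp <;> omega, by simp <;> omega, ?_⟩
      obtain ⟨i, hi⟩ := hpar
      exact ⟨i, by simp; omega⟩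
    · intro a ha b hb
      rw [hlast] at ha
      simp at ha hb
      rw [← ha, ← hb, brickStep_false_iff]
      left; rfl

lemma bw_append_down {x y : ℤ} (hx : 0 ≤ x) (h0 : 0 ≤ y) (h2 : y ≤ 2) (hpar : Even (x + y))
    {p : List (ℤ × ℤ)} (hp : p ∈ BWA x (y + 1)) :
    p ++ [(x + 1, y + 1), (x + 1, y)] ∈ BWA (x + 1) y := by
  obtain ⟨hne, hnd, hbd, hhd, hlast, hch⟩ := hp
  refine ⟨by simp, ?_, ?_, ?_, ?_, ?_⟩
  · rw [List.nodup_append']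
    refine ⟨hnd, by simp <;> omega, ?_⟩
    intro a ha hb
    simp at hb
    have := hbd a ha
    rcases hb with hb | hb <;> (rw [hb] at this; simp at this; try omega)
  · intro q hq
    rcases List.mem_append.1 hq with hq | hq
    · have := hbd q hq
      exact ⟨this.1, by omega, this.2.2⟩
    · simp at hq
      rcases hq with hq | hq <;> (rw [hq]; refine ⟨by omega, by omega, by omega, by omega⟩)
  · intro q hq
    apply hhd
    rw [List.head?_append, List.head?_eq_head hne] at hq
    rwa [List.head?_eq_head hne]
  · rw [show [(x + 1, y + 1), (x + 1, y)] = [(x + 1, y + 1)] ++ [(x + 1, y)] from rfl,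
      ← List.append_assoc, List.getLast?_concat]
  · simp only [List.Chain']; rw [List.isChain_append]
    refine ⟨hch, ?_, ?_⟩
    · rw [List.isChain_cons_cons]
      refine ⟨?_, by simp⟩
      rw [brickStep_false_iff]
      right; right
      refine ⟨by simp <;> omega, by simp <;> omega, ?_⟩
      obtain ⟨i, hi⟩ := hpar
      exact ⟨i + 1, by simp; omega⟩
    · intro a ha b hb
      rw [hlast] at ha
      simp at ha hb
      rw [← ha, ← hb, brickStep_false_iff]
      left; rfl
lemma bw_eq_odd {x y : ℤ} (hx : 0 ≤ x) (hpar : Odd (x + y)) (h1 : 1 ≤ y) (h3 : y ≤ 3) :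
    BWA (x + 1) y = ((fun p => p ++ [(x + 1, y)]) '' BWA x y) ∪
      ((fun p => p ++ [(x + 1, y - 1), (x + 1, y)]) '' BWA x (y - 1)) := by
  ext v
  constructor
  · intro hv
    rcases bw_decompose hx hv with ⟨p, hp, rfl⟩ | ⟨-, p, hp, rfl⟩ | ⟨heven, -⟩
    · exact Or.inl ⟨p, hp, rfl⟩
    · exact Or.inr ⟨p, hp, rfl⟩
    · exact absurd hpar (by simpa using heven)
  · rintro (⟨p, hp, rfl⟩ | ⟨p, hp, rfl⟩)
    · exact bw_append1 hx (by omega) h3 hp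
    · exact bw_append_up hx h1 h3 hpar hp

lemma bw_eq_odd0 {x : ℤ} (hx : 0 ≤ x) (hpar : Odd x) :
    BWA (x + 1) 0 = (fun p => p ++ [(x + 1, 0)]) '' BWA x 0 := by
  ext v
  constructor
  · intro hv
    rcases bw_decompose hx hv with ⟨p, hp, rfl⟩ | ⟨-, p, hp, -⟩ | ⟨heven, -⟩
    · exact ⟨p, hp, rfl⟩
    · rw [BWA_out (Or.inl (by norm_num))] at hp
      exact absurd hp (Set.notMem_empty p)
    · exact absurd hpar (by simpa using heven)
  · rintro ⟨p, hp, rfl⟩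
    exact bw_append1 hx le_rfl (by norm_num) hp

lemma bw_eq_even {x y : ℤ} (hx : 0 ≤ x) (hpar : Even (x + y)) (h0 : 0 ≤ y) (h2 : y ≤ 2) :
    BWA (x + 1) y = ((fun p => p ++ [(x + 1, y)]) '' BWA x y) ∪
      ((fun p => p ++ [(x + 1, y + 1), (x + 1, y)]) '' BWA x (y + 1)) := by
  ext v
  constructor
  · intro hv
    rcases bw_decompose hx hv with ⟨p, hp, rfl⟩ | ⟨hodd, -⟩ | ⟨-, p, hp, rfl⟩
    · exact Or.inl ⟨p, hp, rfl⟩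
    · exact absurd hodd (by simpa using hpar)
    · exact Or.inr ⟨p, hp, rfl⟩
  · rintro (⟨p, hp, rfl⟩ | ⟨p, hp, rfl⟩)
    · exact bw_append1 hx h0 (by omega) hp
    · exact bw_append_down hx h0 h2 hpar hp

lemma bw_eq_even3 {x : ℤ} (hx : 0 ≤ x) (hpar : Even (x + 3)) :
    BWA (x + 1) 3 = (fun p => p ++ [(x + 1, 3)]) '' BWA x 3 := by
  ext v
  constructor
  · intro hv
    rcases bw_decompose hx hv with ⟨p, hp, rfl⟩ | ⟨hodd, -⟩ | ⟨-, p, hp, -⟩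
    · exact ⟨p, hp, rfl⟩
    · exact absurd hodd (by simpa using hpar)
    · rw [BWA_out (Or.inr (by norm_num))] at hp
      exact absurd hp (Set.notMem_empty p)
  · rintro ⟨p, hp, rfl⟩
    exact bw_append1 hx (by norm_num) le_rfl hp

lemma BWA_finite {x y : ℤ} (hx : 0 ≤ x) : (BWA x y).Finite := by
  obtain ⟨n, rfl⟩ := Int.eq_ofNat_of_zero_le hx
  induction n generalizing y with
  | zero => exact_mod_cast BWA_finite_zero y
  | succ n ih =>
    have hcast : ((n + 1 : ℕ) : ℤ) = (n : ℤ) + 1 := by push_cast; ring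
    rw [hcast]
    have hsub : BWA ((n : ℤ) + 1) y ⊆
        ((fun p => p ++ [((n : ℤ) + 1, y)]) '' BWA (n : ℤ) y) ∪
        ((fun p => p ++ [((n : ℤ) + 1, y - 1), ((n : ℤ) + 1, y)]) '' BWA (n : ℤ) (y - 1)) ∪
        ((fun p => p ++ [((n : ℤ) + 1, y + 1), ((n : ℤ) + 1, y)]) '' BWA (n : ℤ) (y + 1)) := by
      intro v hv
      rcases bw_decompose (by positivity) hv with ⟨p, hp, rfl⟩ | ⟨-, p, hp, rfl⟩ | ⟨-, p, hp, rfl⟩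
      · exact Or.inl (Or.inl ⟨p, hp, rfl⟩)
      · exact Or.inl (Or.inr ⟨p, hp, rfl⟩)
      · exact Or.inr ⟨p, hp, rfl⟩
    exact Set.Finite.subset ((((ih (by positivity)).image _).union ((ih (by positivity)).image _)).union ((ih (by positivity)).image _)) hsub
lemma bw_disj {x y z w : ℤ} :
    Disjoint ((fun p => p ++ [(x + 1, y)]) '' BWA x y)
      ((fun p => p ++ [(x + 1, z), (x + 1, y)]) '' BWA x w) := by
  rw [Set.disjoint_left]
  rintro v ⟨p, hp, rfl⟩ ⟨p', hp', he⟩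
  have hd := congrArg List.dropLast he
  simp only [List.dropLast_concat] at hd
  have hd' : p' ++ [(x + 1, z)] = p := by
    rw [← hd]; simp
  obtain ⟨-, -, -, -, h1, -⟩ := hp
  rw [← hd', List.getLast?_concat] at h1
  simp [Prod.ext_iff] at h1

lemma BWA_disj {x y y' : ℤ} (h : y ≠ y') : Disjoint (BWA x y) (BWA x y') := by
  rw [Set.disjoint_left]
  rintro v ⟨hne, -, -, -, h1, -⟩ ⟨-, -, -, -, h2, -⟩
  rw [h1] at h2
  simp [Prod.ext_iff] at h2
  exact h h2

lemma bw_card_odd {x y : ℤ} (hx : 0 ≤ x) (hpar : Odd (x + y)) (h1 : 1 ≤ y) (h3 : y ≤ 3) :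
    (BWA (x + 1) y).ncard = (BWA x y).ncard + (BWA x (y - 1)).ncard := by
  rw [bw_eq_odd hx hpar h1 h3,
    Set.ncard_union_eq bw_disj ((BWA_finite hx).image _) ((BWA_finite hx).image _),
    Set.ncard_image_of_injective _ (List.append_left_injective _),
    Set.ncard_image_of_injective _ (List.append_left_injective _)]

lemma bw_card_odd0 {x : ℤ} (hx : 0 ≤ x) (hpar : Odd x) :
    (BWA (x + 1) 0).ncard = (BWA x 0).ncard := by
  rw [bw_eq_odd0 hx hpar, Set.ncard_image_of_injective _ (List.append_left_injective _)]

lemma bw_card_even {x y : ℤ} (hx : 0 ≤ x) (hpar : Even (x + y)) (h0 : 0 ≤ y) (h2 : y ≤ 2) :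
    (BWA (x + 1) y).ncard = (BWA x y).ncard + (BWA x (y + 1)).ncard := by
  rw [bw_eq_even hx hpar h0 h2,
    Set.ncard_union_eq bw_disj ((BWA_finite hx).image _) ((BWA_finite hx).image _),
    Set.ncard_image_of_injective _ (List.append_left_injective _),
    Set.ncard_image_of_injective _ (List.append_left_injective _)]

lemma bw_card_even3 {x : ℤ} (hx : 0 ≤ x) (hpar : Even (x + 3)) :
    (BWA (x + 1) 3).ncard = (BWA x 3).ncard := by
  rw [bw_eq_even3 hx hpar, Set.ncard_image_of_injective _ (List.append_left_injective _)]

lemma bw_card_zero {y : ℤ} (h0 : 0 ≤ y) (h3 : y ≤ 3) : (BWA 0 y).ncard = 1 := by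
  rw [BWA_zero h0 h3, Set.ncard_singleton]
lemma bw_level (m : ℕ) :
    (BWA (2 * (m : ℤ) + 1) 0).ncard = 2 * 3 ^ m ∧
    (BWA (2 * (m : ℤ) + 1) 1).ncard = 2 * 3 ^ m ∧
    (BWA (2 * (m : ℤ) + 1) 2).ncard = 2 * 3 ^ m ∧
    (BWA (2 * (m : ℤ) + 1) 3).ncard = 2 * 3 ^ m := by
  induction m with
  | zero =>
    have h1 : (2 * ((0 : ℕ) : ℤ) + 1) = (0 : ℤ) + 1 := by norm_num
    rw [h1]
    refine ⟨?_, ?_, ?_, ?_⟩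
    · rw [bw_card_even le_rfl (by rw [Int.even_iff]; omega) le_rfl (by norm_num),
        bw_card_zero le_rfl (by norm_num), bw_card_zero (by norm_num) (by norm_num)]
      norm_num
    · rw [bw_card_odd le_rfl (by rw [Int.odd_iff]; omega) le_rfl (by norm_num),
        bw_card_zero (by norm_num) (by norm_num),
        show (1 : ℤ) - 1 = 0 from by norm_num, bw_card_zero le_rfl (by norm_num)]
      norm_num
    · rw [bw_card_even le_rfl (by rw [Int.even_iff]; omega) (by norm_num) (by norm_num),
        bw_card_zero (by norm_num) (by norm_num),
        show (2 : ℤ) + 1 = 3 from by norm_num, bw_card_zero (by norm_num) le_rfl]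
      norm_num
    · rw [bw_card_odd le_rfl (by rw [Int.odd_iff]; omega) (by norm_num) le_rfl,
        bw_card_zero (by norm_num) le_rfl,
        show (3 : ℤ) - 1 = 2 from by norm_num, bw_card_zero (by norm_num) (by norm_num)]
      norm_num
  | succ m ih =>
    obtain ⟨c0, c1, c2, c3⟩ := ih
    have hx1 : (0 : ℤ) ≤ 2 * (m : ℤ) + 1 := by positivity
    have hx2 : (0 : ℤ) ≤ 2 * (m : ℤ) + 1 + 1 := by positivity
    have A0 : (BWA (2 * (m : ℤ) + 1 + 1) 0).ncard = 2 * 3 ^ m := by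
      rw [bw_card_odd0 hx1 (by rw [Int.odd_iff]; omega), c0]
    have A1 : (BWA (2 * (m : ℤ) + 1 + 1) 1).ncard = 2 * 3 ^ m + 2 * 3 ^ m := by
      rw [bw_card_even hx1 (by rw [Int.even_iff]; omega) (by norm_num) (by norm_num), c1,
        show (1 : ℤ) + 1 = 2 from by norm_num, c2]
    have A2 : (BWA (2 * (m : ℤ) + 1 + 1) 2).ncard = 2 * 3 ^ m + 2 * 3 ^ m := by
      rw [bw_card_odd hx1 (by rw [Int.odd_iff]; omega) (by norm_num) (by norm_num), c2,
        show (2 : ℤ) - 1 = 1 from by norm_num, c1]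
    have A3 : (BWA (2 * (m : ℤ) + 1 + 1) 3).ncard = 2 * 3 ^ m := by
      rw [bw_card_even3 hx1 (by rw [Int.even_iff]; omega), c3]
    have hc : (2 * ((m + 1 : ℕ) : ℤ) + 1) = (2 * (m : ℤ) + 1 + 1) + 1 := by push_cast; ring
    rw [hc]
    refine ⟨?_, ?_, ?_, ?_⟩
    · rw [bw_card_even hx2 (by rw [Int.even_iff]; omega) le_rfl (by norm_num), A0,
        show (0 : ℤ) + 1 = 1 from by norm_num, A1]
      ring
    · rw [bw_card_odd hx2 (by rw [Int.odd_iff]; omega) le_rfl (by norm_num), A1,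
        show (1 : ℤ) - 1 = 0 from by norm_num, A0]
      ring
    · rw [bw_card_even hx2 (by rw [Int.even_iff]; omega) (by norm_num) (by norm_num), A2,
        show (2 : ℤ) + 1 = 3 from by norm_num, A3]
      ring
    · rw [bw_card_odd hx2 (by rw [Int.odd_iff]; omega) (by norm_num) le_rfl, A3,
        show (3 : ℤ) - 1 = 2 from by norm_num, A2]
      ring
lemma brick_eq_union (m : ℕ) :
    brickPaths false (2 * ((m + 1 : ℕ) : ℤ) + 1) 4 =
      BWA (2 * (m : ℤ) + 1 + 1) 0 ∪ BWA (2 * (m : ℤ) + 1 + 1) 1 ∪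
      BWA (2 * (m : ℤ) + 1 + 1) 2 ∪ BWA (2 * (m : ℤ) + 1 + 1) 3 := by
  have hl : 2 * ((m + 1 : ℕ) : ℤ) + 1 - 1 = 2 * (m : ℤ) + 1 + 1 := by push_cast; ring
  ext v
  constructor
  · rintro ⟨hne, hnd, hbd, hhd, hlast, hch⟩
    have hbd' : ∀ p ∈ v, 0 ≤ p.1 ∧ p.1 ≤ 2 * (m : ℤ) + 1 + 1 ∧ 0 ≤ p.2 ∧ p.2 ≤ 3 := by
      intro p hp
      have h := hbd p hp
      rw [hl] at h
      exact ⟨h.1, h.2.1, h.2.2.1, by linarith [h.2.2.2]⟩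
    have hg := List.getLast?_eq_getLast (l := v) hne
    have hg1 : (v.getLast hne).1 = 2 * (m : ℤ) + 1 + 1 := by
      have := hlast (v.getLast hne) (by rw [hg]; rfl)
      rwa [hl] at this
    have hgb := hbd' (v.getLast hne) (List.getLast_mem hne)
    have hmem : ∀ y : ℤ, (v.getLast hne).2 = y → v ∈ BWA (2 * (m : ℤ) + 1 + 1) y := by
      intro y hy
      refine ⟨hne, hnd, hbd', hhd, ?_, hch⟩
      rw [hg]
      congr 1
      exact Prod.ext hg1 hy
    have hy : (v.getLast hne).2 = 0 ∨ (v.getLast hne).2 = 1 ∨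
        (v.getLast hne).2 = 2 ∨ (v.getLast hne).2 = 3 := by omega
    rcases hy with hy | hy | hy | hy
    · exact Or.inl (Or.inl (Or.inl (hmem 0 hy)))
    · exact Or.inl (Or.inl (Or.inr (hmem 1 hy)))
    · exact Or.inl (Or.inr (hmem 2 hy))
    · exact Or.inr (hmem 3 hy)
  · intro hv
    have key : ∀ y : ℤ, v ∈ BWA (2 * (m : ℤ) + 1 + 1) y →
        v ∈ brickPaths false (2 * ((m + 1 : ℕ) : ℤ) + 1) 4 := by
      rintro y ⟨hne, hnd, hbd, hhd, hlast, hch⟩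
      refine ⟨hne, hnd, ?_, hhd, ?_, hch⟩
      · intro p hp
        have h := hbd p hp
        rw [hl]
        exact ⟨h.1, h.2.1, h.2.2.1, by linarith [h.2.2.2]⟩
      · intro p hp
        rw [hlast] at hp
        simp at hp
        rw [← hp, hl]
    rcases hv with ((h | h) | h) | h
    · exact key 0 h
    · exact key 1 h
    · exact key 2 h
    · exact key 3 h

/-- For every integer `k ≥ 1`, the number of brick-wall lattice paths of the
second type in the rectangle `{0,…,2k} × {0,1,2,3}` (width 4, odd length
`l = 2k+1`) equals `4 · 3^k`. -/
theorem brickPaths_second_width_four_odd_length (k : ℕ) (hk : 1 ≤ k) :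
    (brickPaths false (2 * (k : ℤ) + 1) 4).ncard = 4 * 3 ^ k := by
  obtain ⟨m, rfl⟩ : ∃ m, k = m + 1 := ⟨k - 1, by omega⟩
  obtain ⟨c0, c1, c2, c3⟩ := bw_level m
  have hx1 : (0 : ℤ) ≤ 2 * (m : ℤ) + 1 := by positivity
  have hx2 : (0 : ℤ) ≤ 2 * (m : ℤ) + 1 + 1 := by positivity
  have A0 : (BWA (2 * (m : ℤ) + 1 + 1) 0).ncard = 2 * 3 ^ m := by
    rw [bw_card_odd0 hx1 (by rw [Int.odd_iff]; omega), c0]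
  have A1 : (BWA (2 * (m : ℤ) + 1 + 1) 1).ncard = 2 * 3 ^ m + 2 * 3 ^ m := by
    rw [bw_card_even hx1 (by rw [Int.even_iff]; omega) (by norm_num) (by norm_num), c1,
      show (1 : ℤ) + 1 = 2 from by norm_num, c2]
  have A2 : (BWA (2 * (m : ℤ) + 1 + 1) 2).ncard = 2 * 3 ^ m + 2 * 3 ^ m := by
    rw [bw_card_odd hx1 (by rw [Int.odd_iff]; omega) (by norm_num) (by norm_num), c2,
      show (2 : ℤ) - 1 = 1 from by norm_num, c1]
  have A3 : (BWA (2 * (m : ℤ) + 1 + 1) 3).ncard = 2 * 3 ^ m := by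
    rw [bw_card_even3 hx1 (by rw [Int.even_iff]; omega), c3]
  have hf : ∀ y : ℤ, (BWA (2 * (m : ℤ) + 1 + 1) y).Finite := fun y => BWA_finite hx2
  rw [brick_eq_union m,
    Set.ncard_union_eq (by
      refine Set.disjoint_union_left.mpr ⟨Set.disjoint_union_left.mpr ⟨?_, ?_⟩, ?_⟩ <;>
        exact BWA_disj (by norm_num))
      (((hf 0).union (hf 1)).union (hf 2)) (hf 3),
    Set.ncard_union_eq (Set.disjoint_union_left.mpr
      ⟨BWA_disj (by norm_num), BWA_disj (by norm_num)⟩)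
      ((hf 0).union (hf 1)) (hf 2),
    Set.ncard_union_eq (BWA_disj (by norm_num)) (hf 0) (hf 1),
    A0, A1, A2, A3]
  ring
end

section
/- For every integer k ≥ 1, the number of brick-wall lattice paths of the second type in the rectangle R = {0,…,2k−1} × {0,1,2,3} (width w = 4, even length l = 2k) equals 8·3^{k−1}, i.e. B^{(2)}_{2k,4} = 8·3^{k−1}. -/
def BPEnd (l y : ℤ) : Set (List (ℤ × ℤ)) :=
  {v | v ∈ brickPaths false l 4 ∧ v.getLast? = some (l - 1, y)}

lemma brickStep_fst_le {t : Bool} {p q : ℤ × ℤ} (h : BrickStep t p q) : p.1 ≤ q.1 := by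
  rcases h with h | ⟨h, _⟩ | ⟨h, _⟩ <;> simp [h]

lemma fst_le_getLast {b : Bool} : ∀ (v : List (ℤ × ℤ)) (h : v ≠ []),
    List.Chain' (BrickStep b) v → ∀ p ∈ v, p.1 ≤ (v.getLast h).1 := by
  intro v
  induction v with
  | nil => simp
  | cons a t ih =>
    intro _ hch p hp
    cases t with
    | nil => simp at hp; simp [hp]
    | cons c t' =>
      have h1 := List.isChain_cons_cons.mp hch
      rw [List.getLast_cons (by simp : (c :: t') ≠ [])]
      rcases List.mem_cons.mp hp with rfl | hp
      · exact le_trans (brickStep_fst_le h1.1) (ih (by simp) h1.2 c (by simp))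
      · exact ih (by simp) h1.2 p hp

lemma finite_bounded_lists (s : Finset (ℤ × ℤ)) :
    ∀ n : ℕ, {v : List (ℤ × ℤ) | v.length ≤ n ∧ ∀ p ∈ v, p ∈ s}.Finite := by
  intro n
  induction n with
  | zero =>
    apply Set.Finite.subset (Set.finite_singleton [])
    rintro v ⟨h1, _⟩
    simp [List.length_eq_zero_iff.mp (Nat.le_zero.mp h1)]
  | succ n ih =>
    apply Set.Finite.subset
      (Set.Finite.union (Set.finite_singleton ([] : List (ℤ × ℤ)))
        ((s.finite_toSet.prod ih).image (fun pt => pt.1 :: pt.2)))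
    rintro v ⟨h1, h2⟩
    cases v with
    | nil => exact Or.inl rfl
    | cons a t =>
      refine Or.inr ⟨(a, t), ⟨h2 a (by simp), by simpa using Nat.succ_le_succ_iff.mp h1,
        fun p hp => h2 p (by simp [hp])⟩, rfl⟩

lemma pset_finite (l y : ℤ) : (BPEnd l y).Finite := by
  apply Set.Finite.subset (finite_bounded_lists (Finset.Icc 0 (l-1) ×ˢ Finset.Icc 0 3)
    ((Finset.Icc 0 (l-1) ×ˢ Finset.Icc (0:ℤ) 3).card))
  rintro v ⟨⟨_, hnd, hbd, _⟩, _⟩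
  constructor
  · rw [← List.toFinset_card_of_nodup hnd]
    apply Finset.card_le_card
    intro p hp
    have := hbd p (List.mem_toFinset.mp hp)
    simp [Finset.mem_Icc]
    omega
  · intro p hp
    have := hbd p hp
    simp [Finset.mem_Icc]
    omega

lemma pset_one (y : ℤ) (h0 : 0 ≤ y) (h3 : y ≤ 3) : BPEnd 1 y = {[((0:ℤ), y)]} := by
  ext v
  constructor
  · rintro ⟨⟨hne, hnd, hbd, hhead, hlast, hch⟩, hlast'⟩
    cases v with
    | nil => exact absurd rfl hne
    | cons a t =>
      cases t with
      | nil =>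
        simp only [List.getLast?_singleton, Option.some_inj] at hlast'
        simp [hlast']
      | cons c t' =>
        exfalso
        have h1 := (List.isChain_cons_cons.mp hch).1
        have hc := hbd c (by simp)
        have ha0 : a.1 = 0 := hhead a rfl
        rcases h1 with h | ⟨_, h2, _⟩ | ⟨_, h2, _⟩
        · have : c.1 = a.1 + 1 := by rw [h]
          omega
        · exact h2 ha0
        · exact h2 ha0
  · rintro rfl
    refine ⟨⟨by simp, by simp, ?_, by simp, by simp, List.isChain_singleton _⟩, by simp⟩
    rintro p hp
    simp at hp
    simp [hp]
    omega

/-- Peel off the last point of a chain that doesn't start and end at col 0. -/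
lemma peel (v : List (ℤ × ℤ)) (hne : v ≠ []) (hch : List.Chain' (BrickStep false) v)
    (hhead0 : ∀ p ∈ v.head?, p.1 = 0) (hL1 : (v.getLast hne).1 ≠ 0) :
    ∃ (u : List (ℤ × ℤ)) (hu : u ≠ []), u ++ [v.getLast hne] = v ∧
      List.Chain' (BrickStep false) u ∧
      BrickStep false (u.getLast hu) (v.getLast hne) ∧ u.head? = v.head? := by
  have hv : v.dropLast ++ [v.getLast hne] = v := List.dropLast_append_getLast hne
  have hune : v.dropLast ≠ [] := by
    intro h
    rw [h] at hv
    simp only [List.nil_append] at hv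
    have hh := congrArg List.head? hv
    simp only [List.head?_cons] at hh
    exact hL1 (hhead0 _ (by rw [← hh]; rfl))
  have hch2 : List.Chain' (BrickStep false) (v.dropLast ++ [v.getLast hne]) := by
    rw [hv]; exact hch
  obtain ⟨hchu, -, hlink⟩ := List.isChain_append.mp hch2
  refine ⟨v.dropLast, hune, hv, hchu, ?_, ?_⟩
  · exact hlink _ (List.getLast?_eq_getLast hune) _ rfl
  · conv_rhs => rw [← hv]
    rw [List.head?_append]
    rw [List.head?_eq_head hune]
    rfl

lemma mem_bpend_of (l y0 : ℤ) (u : List (ℤ × ℤ)) (hune : u ≠ [])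
    (hch : List.Chain' (BrickStep false) u) (hnd : u.Nodup)
    (hhd : ∀ p ∈ u.head?, p.1 = 0)
    (hlastu : u.getLast hune = (l - 2, y0))
    (hbd : ∀ p ∈ u, 0 ≤ p.1 ∧ 0 ≤ p.2 ∧ p.2 ≤ 3) :
    u ∈ BPEnd (l - 1) y0 := by
  have hxle : ∀ p ∈ u, p.1 ≤ l - 2 := by
    intro p hp
    have := fst_le_getLast u hune hch p hp
    rw [hlastu] at this
    exact this
  refine ⟨⟨hune, hnd, ?_, hhd, ?_, hch⟩, ?_⟩
  · intro p hp
    have h1 := hbd p hp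
    have h2 := hxle p hp
    refine ⟨h1.1, by omega, h1.2.1, by norm_num; exact h1.2.2⟩
  · intro p hp
    rw [List.getLast?_eq_getLast hune, hlastu] at hp
    simp only [Option.mem_def, Option.some_inj] at hp
    rw [← hp]
    omega
  · rw [List.getLast?_eq_getLast hune, hlastu]
    simp only [Option.some_inj]
    exact Prod.ext (by omega) rfl

/-- Appending a tail living in column `l-1`. -/
lemma append_mem_bpend (l y0 y : ℤ) (hl : 2 ≤ l) (h0 : 0 ≤ y) (h3 : y ≤ 3)
    (v1 : List (ℤ × ℤ)) (hv1 : v1 ∈ BPEnd (l - 1) y0) (t : List (ℤ × ℤ))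
    (htne : t ≠ []) (hthead : t.head? = some (l - 1, y0))
    (htlast : t.getLast? = some (l - 1, y))
    (htbd : ∀ p ∈ t, p.1 = l - 1 ∧ 0 ≤ p.2 ∧ p.2 ≤ 3)
    (htnd : t.Nodup) (htch : List.Chain' (BrickStep false) t) :
    v1 ++ t ∈ BPEnd l y := by
  obtain ⟨⟨hne1, hnd1, hbd1, hhd1, hlast1, hch1⟩, hlast1'⟩ := hv1
  have hx1 : ∀ p ∈ v1, p.1 ≤ l - 2 := by
    intro p hp
    have := (hbd1 p hp).2.1
    omega
  refine ⟨⟨by simp [hne1], ?_, ?_, ?_, ?_, ?_⟩, ?_⟩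
  · rw [List.nodup_append]
    refine ⟨hnd1, htnd, ?_⟩
    intro p hp1 _ hp2 rfl
    have := hx1 p hp1
    have := (htbd p hp2).1
    omega
  · intro p hp
    rcases List.mem_append.mp hp with h | h
    · have h1 := hbd1 p h
      have h2 := hx1 p h
      exact ⟨h1.1, by omega, h1.2.2.1, h1.2.2.2⟩
    · have h1 := htbd p h
      refine ⟨by omega, by omega, h1.2.1, by norm_num; exact h1.2.2⟩
  · intro p hp
    rw [List.head?_append, List.head?_eq_head hne1] at hp
    rw [show (some (v1.head hne1)).or t.head? = some (v1.head hne1) from rfl] at hp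
    apply hhd1
    rw [List.head?_eq_head hne1]
    exact hp
  · rw [List.getLast?_append, htlast]
    intro p hp
    simp only [Option.or_some, Option.some_or, Option.mem_def, Option.some_inj] at hp
    rw [← hp]
  · apply List.isChain_append.mpr
    refine ⟨hch1, htch, ?_⟩
    intro a ha b hb
    rw [hlast1'] at ha
    rw [hthead] at hb
    simp only [Option.mem_def, Option.some_inj] at ha hb
    left
    rw [← ha, ← hb]
    exact Prod.ext (by norm_num) rfl
  · rw [List.getLast?_append, htlast]
    rfl

lemma bpend_rec_set (l y : ℤ) (hl : 2 ≤ l) (h0 : 0 ≤ y) (h3 : y ≤ 3) :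
    BPEnd l y =
      ((· ++ [((l - 1 : ℤ), y)]) '' BPEnd (l - 1) y) ∪
      (((if 1 ≤ y ∧ Odd (l + y) then
          (· ++ [((l - 1 : ℤ), y - 1), ((l - 1 : ℤ), y)]) '' BPEnd (l - 1) (y - 1) else ∅)) ∪
       ((if y ≤ 2 ∧ Even (l + y) then
          (· ++ [((l - 1 : ℤ), y + 1), ((l - 1 : ℤ), y)]) '' BPEnd (l - 1) (y + 1) else ∅))) := by
  apply Set.eq_of_subset_of_subset
  · -- hard direction
    rintro v hv
    obtain ⟨⟨hne, hnd, hbd, hhead, hlast, hch⟩, hlast'⟩ := hv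
    have hgl : v.getLast hne = (l - 1, y) := by
      rw [List.getLast?_eq_getLast hne] at hlast'
      exact Option.some_inj.mp hlast'
    have hL1 : (v.getLast hne).1 ≠ 0 := by rw [hgl]; simp; omega
    obtain ⟨u, hune, huv, hchu, hstep1, hheadu⟩ := peel v hne hch hhead hL1
    rw [hgl] at huv hstep1
    have hndu : u.Nodup := hnd.sublist (by rw [← huv]; exact (u.sublist_append_left _))
    have hmemu : ∀ p ∈ u, p ∈ v := by
      intro p hp; rw [← huv]; exact List.mem_append_left _ hp
    have hbdu : ∀ p ∈ u, 0 ≤ p.1 ∧ 0 ≤ p.2 ∧ p.2 ≤ 3 := by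
      intro p hp
      have := hbd p (hmemu p hp)
      exact ⟨this.1, this.2.2.1, by linarith [this.2.2.2]⟩
    have hheadu0 : ∀ p ∈ u.head?, p.1 = 0 := by rw [hheadu]; exact hhead
    rcases hstep1 with hstep | ⟨hq, hne0, hpar⟩ | ⟨hq, hne0, hpar⟩
    · -- horizontal last step: first image
      left
      have hp1 : u.getLast hune = (l - 2, y) := by
        have h1 := congrArg Prod.fst hstep
        have h2 := congrArg Prod.snd hstep
        simp at h1 h2
        exact Prod.ext (by omega) h2.symm
      exact ⟨u, mem_bpend_of l y u hune hchu hndu hheadu0 hp1 hbdu, huv⟩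
    · -- up step into (l-1, y): p1 = (l-1, y-1)
      simp only [if_neg, Bool.false_eq_true, if_false] at hpar
      have hp1 : u.getLast hune = (l - 1, y - 1) := by
        have h1 := congrArg Prod.fst hq
        have h2 := congrArg Prod.snd hq
        simp at h1 h2
        exact Prod.ext h1.symm (by omega)
      -- peel once more
      have hL1' : (u.getLast hune).1 ≠ 0 := by rw [hp1]; simp; omega
      obtain ⟨u', hune', huv', hchu', hstep2, hheadu'⟩ := peel u hune hchu hheadu0 hL1'
      rw [hp1] at huv' hstep2
      have hbd1 := hbdu ((l - 1 : ℤ), y - 1)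
        (by rw [← huv']; exact List.mem_append_right _ (by simp))
      simp only at hbd1
      have hpar' : Odd (l + y) := by
        rw [hp1] at hpar
        simp only at hpar
        rw [Int.odd_iff] at hpar ⊢
        omega
      have hguard : 1 ≤ y ∧ Odd (l + y) := ⟨by omega, hpar'⟩
      right; left
      rw [if_pos hguard]
      have hvdecomp : u' ++ [((l - 1 : ℤ), y - 1), ((l - 1 : ℤ), y)] = v := by
        rw [← huv, ← huv']
        simp
      have hndu' : u'.Nodup := hndu.sublist (by rw [← huv']; exact (u'.sublist_append_left _))
      have hmemu' : ∀ p ∈ u', p ∈ u := by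
        intro p hp; rw [← huv']; exact List.mem_append_left _ hp
      have hheadu0' : ∀ p ∈ u'.head?, p.1 = 0 := by rw [hheadu']; exact hheadu0
      rcases hstep2 with hstep | ⟨hq2, hne02, hpar2⟩ | ⟨hq2, hne02, hpar2⟩
      · have hp2 : u'.getLast hune' = (l - 2, y - 1) := by
          have h1 := congrArg Prod.fst hstep
          have h2 := congrArg Prod.snd hstep
          simp at h1 h2
          exact Prod.ext (by omega) h2.symm
        exact ⟨u', mem_bpend_of l (y - 1) u' hune' hchu' hndu' hheadu0' hp2
          (fun p hp => hbdu p (hmemu' p hp)), hvdecomp⟩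
      · -- up then up: parity contradiction
        exfalso
        simp only [if_neg, Bool.false_eq_true, if_false] at hpar2
        have h1 := congrArg Prod.fst hq2
        have h2 := congrArg Prod.snd hq2
        simp at h1 h2
        rw [Int.odd_iff] at hpar' hpar2
        omega
      · -- down then up: revisits a point
        exfalso
        have h1 := congrArg Prod.fst hq2
        have h2 := congrArg Prod.snd hq2
        simp at h1 h2
        -- u'.getLast = (l-1, y), which equals the final point of v
        have hlast2 : u'.getLast hune' = (l - 1, y) := Prod.ext h1.symm (by omega)
        have hmem1 : ((l - 1 : ℤ), y) ∈ u' := by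
          rw [← hlast2]; exact List.getLast_mem hune'
        have hmem2 : ((l - 1 : ℤ), y) ∈ [((l - 1 : ℤ), y - 1), ((l - 1 : ℤ), y)] := by simp
        have hndv : (u' ++ [((l - 1 : ℤ), y - 1), ((l - 1 : ℤ), y)]).Nodup := by
          rw [hvdecomp]; exact hnd
        exact (List.nodup_append'.mp hndv).2.2 hmem1 hmem2
    · -- down step into (l-1, y): p1 = (l-1, y+1)
      simp only [if_neg, Bool.false_eq_true, if_false] at hpar
      have hp1 : u.getLast hune = (l - 1, y + 1) := by
        have h1 := congrArg Prod.fst hq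
        have h2 := congrArg Prod.snd hq
        simp at h1 h2
        exact Prod.ext h1.symm (by omega)
      have hL1' : (u.getLast hune).1 ≠ 0 := by rw [hp1]; simp; omega
      obtain ⟨u', hune', huv', hchu', hstep2, hheadu'⟩ := peel u hune hchu hheadu0 hL1'
      rw [hp1] at huv' hstep2
      have hbd1 := hbdu ((l - 1 : ℤ), y + 1)
        (by rw [← huv']; exact List.mem_append_right _ (by simp))
      simp only at hbd1
      have hpar' : Even (l + y) := by
        rw [hp1] at hpar
        simp only at hpar
        rw [Int.even_iff] at hpar ⊢
        omega
      have hguard : y ≤ 2 ∧ Even (l + y) := ⟨by omega, hpar'⟩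
      right; right
      rw [if_pos hguard]
      have hvdecomp : u' ++ [((l - 1 : ℤ), y + 1), ((l - 1 : ℤ), y)] = v := by
        rw [← huv, ← huv']
        simp
      have hndu' : u'.Nodup := hndu.sublist (by rw [← huv']; exact (u'.sublist_append_left _))
      have hmemu' : ∀ p ∈ u', p ∈ u := by
        intro p hp; rw [← huv']; exact List.mem_append_left _ hp
      have hheadu0' : ∀ p ∈ u'.head?, p.1 = 0 := by rw [hheadu']; exact hheadu0
      rcases hstep2 with hstep | ⟨hq2, hne02, hpar2⟩ | ⟨hq2, hne02, hpar2⟩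
      · have hp2 : u'.getLast hune' = (l - 2, y + 1) := by
          have h1 := congrArg Prod.fst hstep
          have h2 := congrArg Prod.snd hstep
          simp at h1 h2
          exact Prod.ext (by omega) h2.symm
        exact ⟨u', mem_bpend_of l (y + 1) u' hune' hchu' hndu' hheadu0' hp2
          (fun p hp => hbdu p (hmemu' p hp)), hvdecomp⟩
      · -- up then down: revisits a point
        exfalso
        have h1 := congrArg Prod.fst hq2
        have h2 := congrArg Prod.snd hq2
        simp at h1 h2
        have hlast2 : u'.getLast hune' = (l - 1, y) := Prod.ext h1.symm (by omega)
        have hmem1 : ((l - 1 : ℤ), y) ∈ u' := by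
          rw [← hlast2]; exact List.getLast_mem hune'
        have hmem2 : ((l - 1 : ℤ), y) ∈ [((l - 1 : ℤ), y + 1), ((l - 1 : ℤ), y)] := by simp
        have hndv : (u' ++ [((l - 1 : ℤ), y + 1), ((l - 1 : ℤ), y)]).Nodup := by
          rw [hvdecomp]; exact hnd
        exact (List.nodup_append'.mp hndv).2.2 hmem1 hmem2
      · -- down then down: parity contradiction
        exfalso
        simp only [if_neg, Bool.false_eq_true, if_false] at hpar2
        have h1 := congrArg Prod.fst hq2
        have h2 := congrArg Prod.snd hq2
        simp at h1 h2
        rw [Int.even_iff] at hpar' hpar2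
        omega
  · -- easy direction
    rintro v (⟨v1, hv1, rfl⟩ | hv)
    · exact append_mem_bpend l y y hl h0 h3 v1 hv1 _ (by simp) (by simp) (by simp)
        (by intro p hp; simp at hp; simp [hp]; omega) (by simp) (List.isChain_singleton _)
    · rcases hv with hv | hv
      · split_ifs at hv with hg
        · obtain ⟨v1, hv1, rfl⟩ := hv
          refine append_mem_bpend l (y - 1) y hl h0 h3 v1 hv1 _ (by simp) (by simp) (by simp)
            (by intro p hp; simp at hp
                rcases hp with rfl | rfl
                · exact ⟨rfl, show (0:ℤ) ≤ y - 1 by omega, show (y:ℤ) - 1 ≤ 3 by omega⟩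
                · exact ⟨rfl, show (0:ℤ) ≤ y by omega, show (y:ℤ) ≤ 3 by omega⟩)
            (by simp <;> omega) ?_
          refine List.isChain_pair.mpr (Or.inr (Or.inl ⟨by simp, by simp; omega, ?_⟩))
          simp only [Bool.false_eq_true, if_false]
          have := hg.2
          rw [Int.odd_iff] at this ⊢
          omega
        · exact absurd hv (Set.notMem_empty v)
      · split_ifs at hv with hg
        · obtain ⟨v1, hv1, rfl⟩ := hv
          refine append_mem_bpend l (y + 1) y hl h0 h3 v1 hv1 _ (by simp) (by simp) (by simp)
            (by intro p hp; simp at hp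
                rcases hp with rfl | rfl
                · exact ⟨rfl, show (0:ℤ) ≤ y + 1 by omega, show (y:ℤ) + 1 ≤ 3 by omega⟩
                · exact ⟨rfl, show (0:ℤ) ≤ y by omega, show (y:ℤ) ≤ 3 by omega⟩)
            (by simp <;> omega) ?_
          refine List.isChain_pair.mpr (Or.inr (Or.inr ⟨by simp, by simp; omega, ?_⟩))
          simp only [Bool.false_eq_true, if_false]
          have := hg.2
          rw [Int.even_iff] at this ⊢
          omega
        · exact absurd hv (Set.notMem_empty v)

lemma disj_tail (x y y0 : ℤ) :
    Disjoint ((· ++ [((x : ℤ), y)]) '' BPEnd x y)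
      ((· ++ [((x : ℤ), y0), ((x : ℤ), y)]) '' BPEnd x y0) := by
  rw [Set.disjoint_left]
  rintro w ⟨v1, hv1, rfl⟩ ⟨v2, hv2, heq⟩
  simp only at heq
  have heq2 : (v2 ++ [((x : ℤ), y0)]) ++ [((x : ℤ), y)] = v1 ++ [((x : ℤ), y)] := by
    rw [List.append_assoc]
    exact heq
  have hv12 : v2 ++ [((x : ℤ), y0)] = v1 := List.append_left_injective _ heq2
  have hpmem : ((x : ℤ), y0) ∈ v1 := by rw [← hv12]; simp
  have hb := (hv1.1.2.2.1 _ hpmem).2.1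
  simp only at hb
  omega

lemma bpend_ncard_succ (l y : ℤ) (hl : 1 ≤ l) (h0 : 0 ≤ y) (h3 : y ≤ 3) :
    (BPEnd (l + 1) y).ncard =
      (BPEnd l y).ncard +
      (if 1 ≤ y ∧ Odd (l + 1 + y) then (BPEnd l (y - 1)).ncard else 0) +
      (if y ≤ 2 ∧ Even (l + 1 + y) then (BPEnd l (y + 1)).ncard else 0) := by
  have hset := bpend_rec_set (l + 1) y (by omega) h0 h3
  rw [show (l + 1 : ℤ) - 1 = l from by ring] at hset
  rw [hset]
  have hfin1 : ((· ++ [((l : ℤ), y)]) '' BPEnd l y).Finite := (pset_finite l y).image _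
  rcases Int.even_or_odd (l + 1 + y) with hpar | hpar
  · have hno : ¬(1 ≤ y ∧ Odd (l + 1 + y)) := by
      rw [Int.even_iff] at hpar; rw [Int.odd_iff]; omega
    simp only [if_neg hno, Set.empty_union]
    by_cases hy2 : y ≤ 2
    · have hyes : y ≤ 2 ∧ Even (l + 1 + y) := ⟨hy2, hpar⟩
      simp only [if_pos hyes]
      rw [Set.ncard_union_eq (disj_tail l y (y + 1)) hfin1 ((pset_finite l (y + 1)).image _)]
      rw [Set.ncard_image_of_injective _ (List.append_left_injective _),
        Set.ncard_image_of_injective _ (List.append_left_injective _)]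
      omega
    · have hno2 : ¬(y ≤ 2 ∧ Even (l + 1 + y)) := fun h => hy2 h.1
      simp only [if_neg hno2, Set.union_empty]
      rw [Set.ncard_image_of_injective _ (List.append_left_injective _)]
      omega
  · have hno : ¬(y ≤ 2 ∧ Even (l + 1 + y)) := by
      rw [Int.odd_iff] at hpar; rw [Int.even_iff]; omega
    simp only [if_neg hno, Set.union_empty]
    by_cases hy1 : 1 ≤ y
    · have hyes : 1 ≤ y ∧ Odd (l + 1 + y) := ⟨hy1, hpar⟩
      simp only [if_pos hyes]
      rw [Set.ncard_union_eq (disj_tail l y (y - 1)) hfin1 ((pset_finite l (y - 1)).image _)]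
      rw [Set.ncard_image_of_injective _ (List.append_left_injective _),
        Set.ncard_image_of_injective _ (List.append_left_injective _)]
      omega
    · have hno2 : ¬(1 ≤ y ∧ Odd (l + 1 + y)) := fun h => hy1 h.1
      simp only [if_neg hno2, Set.union_empty]
      rw [Set.ncard_image_of_injective _ (List.append_left_injective _)]
      omega

lemma bpend_one_ncard (y : ℤ) (h0 : 0 ≤ y) (h3 : y ≤ 3) : (BPEnd 1 y).ncard = 1 := by
  rw [pset_one y h0 h3, Set.ncard_singleton]

lemma double_step (l : ℤ) (hl : 1 ≤ l) (hpar : Even l) (c : ℕ)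
    (h : ∀ y : ℤ, 0 ≤ y → y ≤ 3 → (BPEnd l y).ncard = c) :
    ∀ y : ℤ, 0 ≤ y → y ≤ 3 → (BPEnd (l + 2) y).ncard = 3 * c := by
  rw [Int.even_iff] at hpar
  have e0 := h 0 (by norm_num) (by norm_num)
  have e1 := h 1 (by norm_num) (by norm_num)
  have e2 := h 2 (by norm_num) (by norm_num)
  have e3 := h 3 (by norm_num) (by norm_num)
  -- middle column l+1
  have m0 : (BPEnd (l + 1) 0).ncard = c := by
    rw [bpend_ncard_succ l 0 hl (by norm_num) (by norm_num),
      if_neg (by omega : ¬((1:ℤ) ≤ 0 ∧ Odd (l + 1 + 0))),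
      if_neg (by rw [Int.even_iff]; omega : ¬((0:ℤ) ≤ 2 ∧ Even (l + 1 + 0))), e0]
    omega
  have m1 : (BPEnd (l + 1) 1).ncard = 2 * c := by
    rw [bpend_ncard_succ l 1 hl (by norm_num) (by norm_num),
      if_neg (by rw [Int.odd_iff]; omega : ¬((1:ℤ) ≤ 1 ∧ Odd (l + 1 + 1))),
      if_pos ⟨by norm_num, by rw [Int.even_iff]; omega⟩]
    rw [show (1:ℤ) + 1 = 2 from rfl, e1, e2]
    omega
  have m2 : (BPEnd (l + 1) 2).ncard = 2 * c := by
    rw [bpend_ncard_succ l 2 hl (by norm_num) (by norm_num),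
      if_pos ⟨by norm_num, by rw [Int.odd_iff]; omega⟩,
      if_neg (by rw [Int.even_iff]; omega : ¬((2:ℤ) ≤ 2 ∧ Even (l + 1 + 2)))]
    rw [show (2:ℤ) - 1 = 1 from rfl, e2, e1]
    omega
  have m3 : (BPEnd (l + 1) 3).ncard = c := by
    rw [bpend_ncard_succ l 3 hl (by norm_num) (by norm_num),
      if_neg (by rw [Int.odd_iff]; omega : ¬((1:ℤ) ≤ 3 ∧ Odd (l + 1 + 3))),
      if_neg (by omega : ¬((3:ℤ) ≤ 2 ∧ Even (l + 1 + 3))), e3]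
    omega
  intro y h0 h3'
  have hl1 : 1 ≤ l + 1 := by omega
  have key : ∀ z : ℤ, 0 ≤ z → z ≤ 3 → (BPEnd (l + 1 + 1) z).ncard = 3 * c := by
    intro z hz0 hz3
    have hz : z = 0 ∨ z = 1 ∨ z = 2 ∨ z = 3 := by omega
    rcases hz with rfl | rfl | rfl | rfl
    · rw [bpend_ncard_succ (l+1) 0 hl1 (by norm_num) (by norm_num),
        if_neg (by omega : ¬((1:ℤ) ≤ 0 ∧ Odd (l + 1 + 1 + 0))),
        if_pos ⟨by norm_num, by rw [Int.even_iff]; omega⟩]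
      rw [show (0:ℤ) + 1 = 1 from rfl, m0, m1]
      omega
    · rw [bpend_ncard_succ (l+1) 1 hl1 (by norm_num) (by norm_num),
        if_pos ⟨by norm_num, by rw [Int.odd_iff]; omega⟩,
        if_neg (by rw [Int.even_iff]; omega : ¬((1:ℤ) ≤ 2 ∧ Even (l + 1 + 1 + 1)))]
      rw [show (1:ℤ) - 1 = 0 from rfl, m1, m0]
      omega
    · rw [bpend_ncard_succ (l+1) 2 hl1 (by norm_num) (by norm_num),
        if_neg (by rw [Int.odd_iff]; omega : ¬((1:ℤ) ≤ 2 ∧ Odd (l + 1 + 1 + 2))),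
        if_pos ⟨by norm_num, by rw [Int.even_iff]; omega⟩]
      rw [show (2:ℤ) + 1 = 3 from rfl, m2, m3]
      omega
    · rw [bpend_ncard_succ (l+1) 3 hl1 (by norm_num) (by norm_num),
        if_pos ⟨by norm_num, by rw [Int.odd_iff]; omega⟩,
        if_neg (by omega : ¬((3:ℤ) ≤ 2 ∧ Even (l + 1 + 1 + 3)))]
      rw [show (3:ℤ) - 1 = 2 from rfl, m3, m2]
      omega
  have := key y h0 h3'
  rw [show (l + 1 + 1 : ℤ) = l + 2 from by ring] at this
  exact this

lemma bpend_two_ncard (y : ℤ) (h0 : 0 ≤ y) (h3 : y ≤ 3) : (BPEnd 2 y).ncard = 2 := by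
  have hs := bpend_ncard_succ 1 y (by norm_num) h0 h3
  rw [show (1 : ℤ) + 1 = 2 from by norm_num] at hs
  rw [hs]
  have hy : y = 0 ∨ y = 1 ∨ y = 2 ∨ y = 3 := by omega
  rcases hy with rfl | rfl | rfl | rfl
  · rw [if_neg (by rintro ⟨h1, -⟩; omega : ¬((1:ℤ) ≤ 0 ∧ Odd ((2:ℤ) + 0))),
      if_pos (⟨by norm_num, by rw [Int.even_iff]; norm_num⟩ : ((0:ℤ) ≤ 2 ∧ Even ((2:ℤ) + 0))),
      bpend_one_ncard 0 (by norm_num) (by norm_num),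
      bpend_one_ncard (0 + 1) (by norm_num) (by norm_num)]
  · rw [if_pos (⟨by norm_num, by rw [Int.odd_iff]; norm_num⟩ : ((1:ℤ) ≤ 1 ∧ Odd ((2:ℤ) + 1))),
      if_neg (by rintro ⟨-, h2⟩; rw [Int.even_iff] at h2; norm_num at h2 :
        ¬((1:ℤ) ≤ 2 ∧ Even ((2:ℤ) + 1))),
      bpend_one_ncard 1 (by norm_num) (by norm_num),
      bpend_one_ncard (1 - 1) (by norm_num) (by norm_num)]
  · rw [if_neg (by rintro ⟨-, h2⟩; rw [Int.odd_iff] at h2; norm_num at h2 :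
        ¬((1:ℤ) ≤ 2 ∧ Odd ((2:ℤ) + 2))),
      if_pos (⟨by norm_num, by rw [Int.even_iff]; norm_num⟩ : ((2:ℤ) ≤ 2 ∧ Even ((2:ℤ) + 2))),
      bpend_one_ncard 2 (by norm_num) (by norm_num),
      bpend_one_ncard (2 + 1) (by norm_num) (by norm_num)]
  · rw [if_pos (⟨by norm_num, by rw [Int.odd_iff]; norm_num⟩ : ((1:ℤ) ≤ 3 ∧ Odd ((2:ℤ) + 3))),
      if_neg (by rintro ⟨h1, -⟩; omega : ¬((3:ℤ) ≤ 2 ∧ Even ((2:ℤ) + 3))),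
      bpend_one_ncard 3 (by norm_num) (by norm_num),
      bpend_one_ncard (3 - 1) (by norm_num) (by norm_num)]

lemma bpend_even_ncard (k : ℕ) (hk : 1 ≤ k) :
    ∀ y : ℤ, 0 ≤ y → y ≤ 3 → (BPEnd (2 * (k : ℤ)) y).ncard = 2 * 3 ^ (k - 1) := by
  induction k, hk using Nat.le_induction with
  | base =>
    intro y h0 h3
    rw [show (2 * ((1:ℕ) : ℤ)) = 2 from by norm_num]
    simpa using bpend_two_ncard y h0 h3
  | succ n hn ih =>
    intro y h0 h3
    have hstep := double_step (2 * (n : ℤ)) (by omega) ⟨(n : ℤ), by ring⟩ (2 * 3 ^ (n - 1)) ih y h0 h3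
    have hcast : (2 * (((n : ℕ) + 1 : ℕ) : ℤ)) = 2 * (n : ℤ) + 2 := by push_cast; ring
    rw [hcast, hstep]
    obtain ⟨m, rfl⟩ : ∃ m, n = m + 1 := ⟨n - 1, by omega⟩
    simp only [Nat.add_sub_cancel]
    ring

lemma brick_union (L : ℤ) :
    brickPaths false L 4 = BPEnd L 0 ∪ BPEnd L 1 ∪ BPEnd L 2 ∪ BPEnd L 3 := by
  ext v
  constructor
  · intro hv
    obtain ⟨hne, hnd, hbd, hhead, hlast, hch⟩ := hv
    have hglmem : v.getLast hne ∈ v := List.getLast_mem hne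
    have hbds := hbd _ hglmem
    have hx : (v.getLast hne).1 = L - 1 := hlast _ (List.getLast?_eq_getLast hne)
    have hgl : v.getLast? = some ((L - 1 : ℤ), (v.getLast hne).2) := by
      rw [List.getLast?_eq_getLast hne]
      congr 1
      exact Prod.ext hx rfl
    have hy : (v.getLast hne).2 = 0 ∨ (v.getLast hne).2 = 1 ∨
        (v.getLast hne).2 = 2 ∨ (v.getLast hne).2 = 3 := by omega
    have hvmem : v ∈ brickPaths false L 4 := ⟨hne, hnd, hbd, hhead, hlast, hch⟩
    rcases hy with h | h | h | h
    · exact Or.inl (Or.inl (Or.inl ⟨hvmem, by rw [hgl, h]⟩))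
    · exact Or.inl (Or.inl (Or.inr ⟨hvmem, by rw [hgl, h]⟩))
    · exact Or.inl (Or.inr ⟨hvmem, by rw [hgl, h]⟩)
    · exact Or.inr ⟨hvmem, by rw [hgl, h]⟩
  · rintro (((h | h) | h) | h) <;> exact h.1

lemma bpend_disj (L y y' : ℤ) (h : y ≠ y') : Disjoint (BPEnd L y) (BPEnd L y') := by
  rw [Set.disjoint_left]
  rintro v ⟨_, h1⟩ ⟨_, h2⟩
  rw [h1] at h2
  apply h
  have := Option.some_inj.mp h2
  exact congrArg Prod.snd this

/-- For every integer `k ≥ 1`, the number of brick-wall lattice paths of the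
second type in the rectangle `{0,…,2k−1} × {0,1,2,3}` (width 4, even length
`l = 2k`) equals `8 · 3^(k−1)`. -/
theorem brickPaths_second_width_four_even_length (k : ℕ) (hk : 1 ≤ k) :
    (brickPaths false (2 * (k : ℤ)) 4).ncard = 8 * 3 ^ (k - 1) := by
  rw [brick_union]
  have e := bpend_even_ncard k hk
  have f := pset_finite
  rw [Set.ncard_union_eq (by
      refine Set.disjoint_union_left.mpr ⟨Set.disjoint_union_left.mpr ⟨?_, ?_⟩, ?_⟩ <;>
        exact bpend_disj _ _ _ (by norm_num))
    (((f _ _).union (f _ _)).union (f _ _)) (f _ _)]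
  rw [Set.ncard_union_eq (Set.disjoint_union_left.mpr
      ⟨bpend_disj _ _ _ (by norm_num), bpend_disj _ _ _ (by norm_num)⟩)
    ((f _ _).union (f _ _)) (f _ _)]
  rw [Set.ncard_union_eq (bpend_disj _ _ _ (by norm_num)) (f _ _) (f _ _)]
  rw [e 0 (by norm_num) (by norm_num), e 1 (by norm_num) (by norm_num),
    e 2 (by norm_num) (by norm_num), e 3 (by norm_num) (by norm_num)]
  ring
end

section
/- For every integer k ≥ 1, the number of brick-wall lattice paths of the first type in the rectangle R = {0,…,2k−1} × {0,1,2,3} (width w = 4, even length l = 2k) equals 6·3^{k−1}, i.e. B^{(1)}_{2k,4} = 6·3^{k−1}. -/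
def vtgt (p : ℤ × ℤ) : ℤ × ℤ := if Even (p.1 + p.2) then (p.1, p.2 + 1) else (p.1, p.2 - 1)

def availP (p : ℤ × ℤ) : Prop :=
  p.1 ≠ 0 ∧ ((Even (p.1 + p.2) ∧ p.2 + 1 ≤ 3) ∨ (¬ Even (p.1 + p.2) ∧ 0 ≤ p.2 - 1))

instance : DecidablePred availP := fun p => by unfold availP; infer_instance

inductive Tail (l : ℤ) : ℤ × ℤ → Bool → List (ℤ × ℤ) → Prop
  | nil (p : ℤ × ℤ) (b : Bool) (h : p.1 = l - 1) : Tail l p b []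
  | right (p : ℤ × ℤ) (b : Bool) (v : List (ℤ × ℤ)) (h : p.1 + 1 ≤ l - 1)
      (ht : Tail l (p.1 + 1, p.2) true v) : Tail l p b ((p.1 + 1, p.2) :: v)
  | up (p : ℤ × ℤ) (v : List (ℤ × ℤ)) (h0 : p.1 ≠ 0) (he : Even (p.1 + p.2))
      (hy : p.2 + 1 ≤ 3) (ht : Tail l (p.1, p.2 + 1) false v) :
      Tail l p true ((p.1, p.2 + 1) :: v)
  | down (p : ℤ × ℤ) (v : List (ℤ × ℤ)) (h0 : p.1 ≠ 0) (he : ¬ Even (p.1 + p.2))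
      (hy : 0 ≤ p.2 - 1) (ht : Tail l (p.1, p.2 - 1) false v) :
      Tail l p true ((p.1, p.2 - 1) :: v)

def Nf : ℕ → ℤ × ℤ → ℕ
  | 0, _ => 1
  | n + 1, p =>
      Nf n (p.1 + 1, p.2) +
        if availP (p.1 + 1, p.2) then Nf n (vtgt (p.1 + 1, p.2)) else 0

def Nt (n : ℕ) (p : ℤ × ℤ) : ℕ := Nf n p + if availP p then Nf n (vtgt p) else 0

lemma Nf_succ (n : ℕ) (p : ℤ × ℤ) : Nf (n + 1) p = Nt n (p.1 + 1, p.2) := rfl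

lemma vtgt_ne (p : ℤ × ℤ) : vtgt p ≠ p := by
  unfold vtgt; split <;>
    · intro h; have := congrArg Prod.snd h; simp at this

lemma vtgt_fst (p : ℤ × ℤ) : (vtgt p).1 = p.1 := by
  unfold vtgt; split <;> rfl

lemma Tail.key {l : ℤ} {p : ℤ × ℤ} {b : Bool} {w : List (ℤ × ℤ)} (h : Tail l p b w) :
    w.Nodup ∧ ∀ q ∈ w, p.1 < q.1 ∨ (b = true ∧ q = vtgt p) := by
  induction h with
  | nil => simp
  | right p b v h ht ih =>
    obtain ⟨hnd, hm⟩ := ih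
    constructor
    · refine List.nodup_cons.2 ⟨fun hc => ?_, hnd⟩
      rcases hm _ hc with h1 | ⟨_, h2⟩
      · simp at h1
      · exact vtgt_ne _ h2.symm
    · intro q hq
      rw [List.mem_cons] at hq
      rcases hq with rfl | hq
      · left; simp
      · rcases hm q hq with h1 | ⟨_, h2⟩
        · left; simp at h1 ⊢; omega
        · left; subst h2; rw [vtgt_fst]; simp
  | up p v h0 he hy ht ih =>
    obtain ⟨hnd, hm⟩ := ih
    have hm' : ∀ q ∈ v, (p.1, p.2 + 1).1 < q.1 := by
      intro q hq; rcases hm q hq with h1 | ⟨h2, _⟩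
      · exact h1
      · simp at h2
    constructor
    · exact List.nodup_cons.2 ⟨fun hc => by have := hm' _ hc; simp at this, hnd⟩
    · intro q hq
      rw [List.mem_cons] at hq
      rcases hq with rfl | hq
      · right; exact ⟨rfl, by unfold vtgt; rw [if_pos he]⟩
      · left; exact hm' q hq
  | down p v h0 he hy ht ih =>
    obtain ⟨hnd, hm⟩ := ih
    have hm' : ∀ q ∈ v, (p.1, p.2 - 1).1 < q.1 := by
      intro q hq; rcases hm q hq with h1 | ⟨h2, _⟩
      · exact h1
      · simp at h2
    constructor
    · exact List.nodup_cons.2 ⟨fun hc => by have := hm' _ hc; simp at this, hnd⟩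
    · intro q hq
      rw [List.mem_cons] at hq
      rcases hq with rfl | hq
      · right; exact ⟨rfl, by unfold vtgt; rw [if_neg he]⟩
      · left; exact hm' q hq

lemma Tail.nodup_cons {l : ℤ} {p : ℤ × ℤ} {b : Bool} {w : List (ℤ × ℤ)}
    (h : Tail l p b w) : (p :: w).Nodup := by
  obtain ⟨hnd, hm⟩ := h.key
  refine List.nodup_cons.2 ⟨fun hc => ?_, hnd⟩
  rcases hm p hc with h1 | ⟨_, h2⟩
  · omega
  · exact vtgt_ne _ h2.symm

lemma Tail.chain {l : ℤ} {p : ℤ × ℤ} {b : Bool} {w : List (ℤ × ℤ)}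
    (h : Tail l p b w) : List.Chain (BrickStep true) p w := by
  induction h with
  | nil => exact List.Chain.nil
  | right p b v h ht ih => exact List.Chain.cons (Or.inl rfl) ih
  | up p v h0 he hy ht ih =>
    exact List.Chain.cons (Or.inr (Or.inl ⟨rfl, h0, by simpa using he⟩)) ih
  | down p v h0 he hy ht ih =>
    exact List.Chain.cons (Or.inr (Or.inr ⟨rfl, h0, by simpa using (Int.not_even_iff_odd.1 he)⟩)) ih

lemma Tail.bounds {l : ℤ} {p : ℤ × ℤ} {b : Bool} {w : List (ℤ × ℤ)}
    (h : Tail l p b w) (hp : 0 ≤ p.1 ∧ p.1 ≤ l - 1 ∧ 0 ≤ p.2 ∧ p.2 ≤ 3) :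
    ∀ q ∈ w, 0 ≤ q.1 ∧ q.1 ≤ l - 1 ∧ 0 ≤ q.2 ∧ q.2 ≤ 3 := by
  induction h with
  | nil => simp
  | right p b v h ht ih =>
    intro q hq
    rw [List.mem_cons] at hq
    rcases hq with rfl | hq
    · exact ⟨by omega, by omega, hp.2.2.1, hp.2.2.2⟩
    · exact ih ⟨by omega, by omega, hp.2.2.1, hp.2.2.2⟩ q hq
  | up p v h0 he hy ht ih =>
    intro q hq
    rw [List.mem_cons] at hq
    rcases hq with rfl | hq
    · exact ⟨hp.1, hp.2.1, by omega, by simpa using hy⟩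
    · exact ih ⟨hp.1, hp.2.1, by omega, by simpa using hy⟩ q hq
  | down p v h0 he hy ht ih =>
    intro q hq
    rw [List.mem_cons] at hq
    rcases hq with rfl | hq
    · exact ⟨hp.1, hp.2.1, by simpa using hy, by omega⟩
    · exact ih ⟨hp.1, hp.2.1, by simpa using hy, by omega⟩ q hq

lemma Tail.last {l : ℤ} {p : ℤ × ℤ} {b : Bool} {w : List (ℤ × ℤ)}
    (h : Tail l p b w) : ∀ hne, ((p :: w).getLast hne).1 = l - 1 := by
  induction h with
  | nil p b h => intro hne; simpa using h
  | right p b v h ht ih => intro hne; rw [List.getLast_cons (by simp)]; exact ih (by simp)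
  | up p v h0 he hy ht ih => intro hne; rw [List.getLast_cons (by simp)]; exact ih (by simp)
  | down p v h0 he hy ht ih => intro hne; rw [List.getLast_cons (by simp)]; exact ih (by simp)

lemma Tail.falsify {l : ℤ} {p : ℤ × ℤ} {w : List (ℤ × ℤ)} (h : Tail l p true w)
    (hh : ∀ q ∈ w.head?, q.1 = p.1 + 1) : Tail l p false w := by
  cases h with
  | nil p b h => exact Tail.nil p false h
  | right p b v h ht => exact Tail.right p false v h ht
  | up p v h0 he hy ht => have := hh (p.1, p.2 + 1) (by simp); simp at this
  | down p v h0 he hy ht => have := hh (p.1, p.2 - 1) (by simp); simp at this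

lemma brickStep_cases {p r : ℤ × ℤ} (h : BrickStep true p r) :
    r = (p.1 + 1, p.2) ∨
    (r = (p.1, p.2 + 1) ∧ p.1 ≠ 0 ∧ Even (p.1 + p.2)) ∨
    (r = (p.1, p.2 - 1) ∧ p.1 ≠ 0 ∧ ¬ Even (p.1 + p.2)) := by
  rcases h with h | ⟨h1, h2, h3⟩ | ⟨h1, h2, h3⟩
  · exact Or.inl h
  · exact Or.inr (Or.inl ⟨h1, h2, by simpa using h3⟩)
  · exact Or.inr (Or.inr ⟨h1, h2, Int.not_even_iff_odd.2 (by simpa using h3)⟩)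

lemma step_back {p r s : ℤ × ℤ} (h1 : BrickStep true p r) (h2 : BrickStep true r s)
    (hv : r.1 = p.1) (hs : s ≠ p) : s.1 = r.1 + 1 := by
  rcases brickStep_cases h1 with g | ⟨g1, g2, g3⟩ | ⟨g1, g2, g3⟩
  · exfalso; rw [g] at hv; simp at hv
  · -- r = p + e2, Even (p.1+p.2)
    rcases brickStep_cases h2 with f | ⟨f1, f2, f3⟩ | ⟨f1, f2, f3⟩
    · rw [f]
    · exfalso
      rw [g1] at f3
      simp only at f3
      have h3' := Int.even_iff.1 g3
      have f3' := Int.even_iff.1 f3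
      omega
    · exfalso
      apply hs
      rw [f1, g1]
      ext <;> simp [g1]
  · rcases brickStep_cases h2 with f | ⟨f1, f2, f3⟩ | ⟨f1, f2, f3⟩
    · rw [f]
    · exfalso
      apply hs
      rw [f1, g1]
      ext <;> simp [g1]
    · exfalso
      rw [g1] at f3
      simp only at f3
      rw [Int.not_even_iff] at f3 g3
      omega

lemma toTail {l : ℤ} : ∀ (w : List (ℤ × ℤ)) (p : ℤ × ℤ),
    List.Chain (BrickStep true) p w → (p :: w).Nodup →
    (∀ q ∈ p :: w, 0 ≤ q.1 ∧ q.1 ≤ l - 1 ∧ 0 ≤ q.2 ∧ q.2 ≤ 3) →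
    ((p :: w).getLast (by simp)).1 = l - 1 → Tail l p true w := by
  intro w
  induction w with
  | nil =>
    intro p _ _ _ hl
    exact Tail.nil p true (by simpa using hl)
  | cons r w' ih =>
    intro p hch hnd hb hl
    have hch' : List.Chain (BrickStep true) r w' := (List.chain_cons.1 hch).2
    have hstep : BrickStep true p r := (List.chain_cons.1 hch).1
    have hnd' : (r :: w').Nodup := (List.nodup_cons.1 hnd).2
    have hb' : ∀ q ∈ r :: w', 0 ≤ q.1 ∧ q.1 ≤ l - 1 ∧ 0 ≤ q.2 ∧ q.2 ≤ 3 := by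
      intro q hq; exact hb q (List.mem_cons_of_mem _ hq)
    have hl' : ((r :: w').getLast (by simp)).1 = l - 1 := by
      rwa [List.getLast_cons (by simp)] at hl
    have htr : Tail l r true w' := ih r hch' hnd' hb' hl'
    have hbr := hb' r List.mem_cons_self
    have hhead : r.1 = p.1 → ∀ q ∈ w'.head?, q.1 = r.1 + 1 := by
      intro hv q hq
      rcases w' with _ | ⟨s, w''⟩
      · simp at hq
      · simp only [List.head?_cons, Option.mem_some_iff] at hq
        obtain rfl := hq.symm
        have hstep2 : BrickStep true r q := (List.chain_cons.1 hch').1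
        have hqp : q ≠ p := by
          intro hqp
          have hp : p ∉ r :: q :: w'' := (List.nodup_cons.1 hnd).1
          exact hp (by rw [← hqp]; simp)
        exact step_back hstep hstep2 hv hqp
    rcases brickStep_cases hstep with h | ⟨h1, h2, h3⟩ | ⟨h1, h2, h3⟩
    · subst h
      exact Tail.right p true w' (by simpa using hbr.2.1) htr
    · have htrf : Tail l r false w' := htr.falsify (hhead (by rw [h1]))
      rw [h1] at htrf ⊢
      refine Tail.up p w' h2 h3 ?_ htrf
      have := hbr.2.2.2; rw [h1] at this; simpa using this
    · have htrf : Tail l r false w' := htr.falsify (hhead (by rw [h1]))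
      rw [h1] at htrf ⊢
      refine Tail.down p w' h2 h3 ?_ htrf
      have := hbr.2.2.1; rw [h1] at this; simpa using this

lemma mem_brickPaths_iff {l : ℤ} (hl : 1 ≤ l) (v : List (ℤ × ℤ)) :
    v ∈ brickPaths true l 4 ↔
      ∃ y w, 0 ≤ y ∧ y ≤ 3 ∧ v = ((0 : ℤ), y) :: w ∧ Tail l (0, y) true w := by
  constructor
  · rintro ⟨hne, hnd, hbd, hhd, hlast, hch⟩
    obtain ⟨p, w, rfl⟩ := List.exists_cons_of_ne_nil hne
    have hp1 : p.1 = 0 := hhd p (by simp)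
    have hbp := hbd p (by simp)
    have hpe : p = ((0 : ℤ), p.2) := by ext <;> simp [hp1]
    refine ⟨p.2, w, hbp.2.2.1, by simpa using hbp.2.2.2, by rw [← hpe], ?_⟩
    rw [← hpe]
    refine toTail w p hch hnd (by simpa using hbd) ?_
    have := hlast ((p :: w).getLast (by simp)) ?_
    · exact this
    · rw [List.getLast?_eq_getLast (l := p :: w) (by simp)]
      simp
  · rintro ⟨y, w, hy0, hy3, rfl, ht⟩
    refine ⟨by simp, ht.nodup_cons, ?_, by simp, ?_, ht.chain⟩
    · intro q hq
      rw [List.mem_cons] at hq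
      rcases hq with rfl | hq
      · exact ⟨le_refl _, by omega, by simpa using hy0, by simpa using hy3⟩
      · have := ht.bounds ⟨le_refl _, by omega, by simpa using hy0, by simpa using hy3⟩ q hq
        exact ⟨this.1, this.2.1, this.2.2.1, by simpa using this.2.2.2⟩
    · intro q hq
      rw [List.getLast?_eq_getLast (l := ((0 : ℤ), y) :: w) (by simp), Option.mem_some_iff] at hq
      rw [← hq]
      exact ht.last (by simp)

lemma Tail.truify {l : ℤ} {p : ℤ × ℤ} {w : List (ℤ × ℤ)} (h : Tail l p false w) :
    Tail l p true w := by
  cases h with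
  | nil p b h => exact Tail.nil p true h
  | right p b v h ht => exact Tail.right p true v h ht

lemma cons_inj (a : ℤ × ℤ) : Function.Injective (List.cons a) := fun x y hxy => by
  simpa using hxy

lemma countT' (n : ℕ) (l : ℤ) (p : ℤ × ℤ)
    (hF : {w | Tail l p false w}.Finite)
    (hFc : {w | Tail l p false w}.ncard = Nf n p)
    (hFv : {w | Tail l (vtgt p) false w}.Finite)
    (hFvc : {w | Tail l (vtgt p) false w}.ncard = Nf n (vtgt p)) :
    {w | Tail l p true w}.Finite ∧ {w | Tail l p true w}.ncard = Nt n p := by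
  by_cases ha : availP p
  · have hdecomp : {w | Tail l p true w} =
        {w | Tail l p false w} ∪ (List.cons (vtgt p)) '' {w | Tail l (vtgt p) false w} := by
      ext w
      constructor
      · intro hw
        cases hw with
        | nil p b h => exact Or.inl (Tail.nil p false h)
        | right p b v h ht => exact Or.inl (Tail.right p false v h ht)
        | up p v h0 he hy ht =>
          refine Or.inr ⟨v, ?_, ?_⟩
          · show Tail l (vtgt p) false v
            unfold vtgt; rw [if_pos he]; exact ht
          · unfold vtgt; rw [if_pos he]
        | down p v h0 he hy ht =>
          refine Or.inr ⟨v, ?_, ?_⟩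
          · show Tail l (vtgt p) false v
            unfold vtgt; rw [if_neg he]; exact ht
          · unfold vtgt; rw [if_neg he]
      · rintro (hw | ⟨x, hx, rfl⟩)
        · exact hw.truify
        · obtain ⟨h0, hor⟩ := ha
          rcases hor with ⟨he, hy⟩ | ⟨he, hy⟩
          · have hv : vtgt p = (p.1, p.2 + 1) := by unfold vtgt; rw [if_pos he]
            rw [hv] at hx ⊢
            exact Tail.up p x h0 he hy hx
          · have hv : vtgt p = (p.1, p.2 - 1) := by unfold vtgt; rw [if_neg he]
            rw [hv] at hx ⊢
            exact Tail.down p x h0 he hy hx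
    have hdisj : Disjoint {w | Tail l p false w}
        ((List.cons (vtgt p)) '' {w | Tail l (vtgt p) false w}) := by
      rw [Set.disjoint_left]
      rintro w hw ⟨x, hx, rfl⟩
      have hhd : ∀ q ∈ (vtgt p :: x).head?, q.1 = p.1 + 1 := by
        generalize hgen : vtgt p :: x = w' at hw
        cases hw with
        | nil p b h => exact absurd hgen (by simp)
        | right p b v h ht =>
          intro q hq
          rw [← hgen] at hq
          simp only [List.head?_cons, Option.mem_some_iff] at hq
          obtain rfl := hq.symm
          have := congrArg List.head? hgen
          simp only [List.head?_cons, Option.some_inj] at this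
          rw [this]
      have := hhd (vtgt p) (by simp)
      rw [vtgt_fst] at this
      omega
    have hfin : ({w | Tail l p true w}).Finite := by
      rw [hdecomp]; exact hF.union (hFv.image _)
    refine ⟨hfin, ?_⟩
    rw [hdecomp, Set.ncard_union_eq hdisj hF (hFv.image _),
      Set.ncard_image_of_injective _ (cons_inj _), hFc, hFvc]
    unfold Nt
    rw [if_pos ha]
  · have hdecomp : {w | Tail l p true w} = {w | Tail l p false w} := by
      ext w
      constructor
      · intro hw
        cases hw with
        | nil p b h => exact Tail.nil p false h
        | right p b v h ht => exact Tail.right p false v h ht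
        | up p v h0 he hy ht => exact absurd ⟨h0, Or.inl ⟨he, hy⟩⟩ ha
        | down p v h0 he hy ht => exact absurd ⟨h0, Or.inr ⟨he, hy⟩⟩ ha
      · exact Tail.truify
    rw [hdecomp]
    refine ⟨hF, ?_⟩
    rw [hFc]
    unfold Nt
    rw [if_neg ha, add_zero]

lemma countF : ∀ (n : ℕ) (l : ℤ) (p : ℤ × ℤ), p.1 = l - 1 - n →
    {w | Tail l p false w}.Finite ∧ {w | Tail l p false w}.ncard = Nf n p := by
  intro n
  induction n with
  | zero =>
    intro l p hp
    simp only [Nat.cast_zero, sub_zero] at hp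
    have : {w | Tail l p false w} = {[]} := by
      ext w
      constructor
      · intro hw
        cases hw with
        | nil => rfl
        | right p b v h ht => exfalso; omega
      · rintro rfl
        exact Tail.nil p false hp
    rw [this]
    simp [Nf]
  | succ n ih =>
    intro l p hp
    have hp' : (p.1 + 1, p.2).1 = l - 1 - n := by
      show p.1 + 1 = l - 1 - (n : ℤ); push_cast at hp; omega
    have hv : (vtgt (p.1 + 1, p.2)).1 = l - 1 - n := by rw [vtgt_fst]; exact hp'
    have hvp : vtgt (p.1 + 1, p.2) = ((vtgt (p.1 + 1, p.2)).1, (vtgt (p.1 + 1, p.2)).2) := rfl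
    obtain ⟨F1, C1⟩ := ih l (p.1 + 1, p.2) hp'
    obtain ⟨F2, C2⟩ := ih l (vtgt (p.1 + 1, p.2)) hv
    obtain ⟨FT, CT⟩ := countT' n l (p.1 + 1, p.2) F1 C1 F2 C2
    have hdecomp : {w | Tail l p false w} =
        (List.cons (p.1 + 1, p.2)) '' {w | Tail l (p.1 + 1, p.2) true w} := by
      ext w
      constructor
      · intro hw
        cases hw with
        | nil p b h => exfalso; push_cast at hp; omega
        | right p b v h ht => exact ⟨v, ht, rfl⟩
      · rintro ⟨x, hx, rfl⟩
        refine Tail.right p false x ?_ hx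
        push_cast at hp; omega
    rw [hdecomp]
    refine ⟨FT.image _, ?_⟩
    rw [Set.ncard_image_of_injective _ (cons_inj _), CT, Nf_succ]

lemma countT (n : ℕ) (l : ℤ) (p : ℤ × ℤ) (hp : p.1 = l - 1 - n) :
    {w | Tail l p true w}.Finite ∧ {w | Tail l p true w}.ncard = Nt n p := by
  obtain ⟨F1, C1⟩ := countF n l p hp
  obtain ⟨F2, C2⟩ := countF n l (vtgt p) (by rw [vtgt_fst]; exact hp)
  exact countT' n l p F1 C1 F2 C2

lemma availP_yes {a b : ℤ} (h0 : a ≠ 0)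
    (h : ((a + b) % 2 = 0 ∧ b ≤ 2) ∨ ((a + b) % 2 = 1 ∧ 1 ≤ b)) : availP (a, b) := by
  rcases h with ⟨he, hb⟩ | ⟨he, hb⟩
  · exact ⟨h0, Or.inl ⟨Int.even_iff.2 he, by omega⟩⟩
  · refine ⟨h0, Or.inr ⟨?_, by omega⟩⟩
    rw [Int.even_iff]; omega

lemma availP_no {a b : ℤ}
    (h : a = 0 ∨ ((a + b) % 2 = 0 ∧ 3 ≤ b) ∨ ((a + b) % 2 = 1 ∧ b ≤ 0)) : ¬ availP (a, b) := by
  rintro ⟨h0, ⟨he, hb⟩ | ⟨he, hb⟩⟩ <;> rw [Int.even_iff] at he <;> simp only at h0 he hb <;>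
    rcases h with h | ⟨h1, h2⟩ | ⟨h1, h2⟩ <;> omega

lemma vtgt_up {a b : ℤ} (h : (a + b) % 2 = 0) : vtgt (a, b) = (a, b + 1) := by
  unfold vtgt; rw [if_pos (Int.even_iff.2 h)]

lemma vtgt_dn {a b : ℤ} (h : (a + b) % 2 = 1) : vtgt (a, b) = (a, b - 1) := by
  unfold vtgt; rw [if_neg]; rw [Int.even_iff]; omega

lemma Nt_yes {n : ℕ} {a b : ℤ} (h : availP (a, b)) :
    Nt n (a, b) = Nf n (a, b) + Nf n (vtgt (a, b)) := by unfold Nt; rw [if_pos h]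

lemma Nt_no {n : ℕ} {a b : ℤ} (h : ¬ availP (a, b)) : Nt n (a, b) = Nf n (a, b) := by
  unfold Nt; rw [if_neg h, add_zero]

lemma Nf_succ' (n : ℕ) (a b : ℤ) : Nf (n + 1) (a, b) = Nt n (a + 1, b) := rfl

lemma Nt_vals : ∀ (m : ℕ) (x : ℤ), x % 2 = 1 → 1 ≤ x →
    Nt (2 * m) (x, 0) = 3 ^ m ∧ Nt (2 * m) (x, 1) = 2 * 3 ^ m ∧
      Nt (2 * m) (x, 2) = 2 * 3 ^ m ∧ Nt (2 * m) (x, 3) = 3 ^ m := by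
  intro m
  induction m with
  | zero =>
    intro x hx h1
    refine ⟨?_, ?_, ?_, ?_⟩
    · rw [Nt_no (availP_no (by omega))]; rfl
    · rw [Nt_yes (availP_yes (by omega) (by omega))]; rfl
    · rw [Nt_yes (availP_yes (by omega) (by omega))]; rfl
    · rw [Nt_no (availP_no (by omega))]; rfl
  | succ m ih =>
    intro x hx h1
    obtain ⟨A0, A1, A2, A3⟩ := ih (x + 2) (by omega) (by omega)
    -- middle column x+1 (even): all four values are 3^(m+1)
    have hNf : ∀ b : ℤ, Nf (2 * m + 1) (x + 1, b) = Nt (2 * m) (x + 2, b) := by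
      intro b
      rw [Nf_succ' (2 * m) (x + 1) b]
      norm_num [add_assoc]
    have U0 : Nt (2 * m + 1) (x + 1, 0) = 3 ^ (m + 1) := by
      rw [Nt_yes (availP_yes (by omega) (Or.inl ⟨by omega, by omega⟩)), vtgt_up (by omega)]
      norm_num [hNf, A0, A1]
      try ring
    have U1 : Nt (2 * m + 1) (x + 1, 1) = 3 ^ (m + 1) := by
      rw [Nt_yes (availP_yes (by omega) (Or.inr ⟨by omega, by omega⟩)), vtgt_dn (by omega)]
      norm_num [hNf, A0, A1]
      try ring
    have U2 : Nt (2 * m + 1) (x + 1, 2) = 3 ^ (m + 1) := by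
      rw [Nt_yes (availP_yes (by omega) (Or.inl ⟨by omega, by omega⟩)), vtgt_up (by omega)]
      norm_num [hNf, A2, A3]
      try ring
    have U3 : Nt (2 * m + 1) (x + 1, 3) = 3 ^ (m + 1) := by
      rw [Nt_yes (availP_yes (by omega) (Or.inr ⟨by omega, by omega⟩)), vtgt_dn (by omega)]
      norm_num [hNf, A2, A3]
      try ring
    have hNf2 : ∀ b : ℤ, Nf (2 * (m + 1)) (x, b) = Nt (2 * m + 1) (x + 1, b) := by
      intro b
      have : 2 * (m + 1) = (2 * m + 1) + 1 := by omega
      rw [this, Nf_succ' (2 * m + 1) x b]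
    refine ⟨?_, ?_, ?_, ?_⟩
    · rw [Nt_no (availP_no (by omega)), hNf2, U0]
    · rw [Nt_yes (availP_yes (by omega) (Or.inl ⟨by omega, by omega⟩)), vtgt_up (by omega)]
      norm_num [hNf2, U1, U2]
      try ring
    · rw [Nt_yes (availP_yes (by omega) (Or.inr ⟨by omega, by omega⟩)), vtgt_dn (by omega)]
      norm_num [hNf2, U1, U2]
      try ring
    · rw [Nt_no (availP_no (by omega)), hNf2, U3]

lemma disj_cons {a b : ℤ × ℤ} (h : a ≠ b) (s t : Set (List (ℤ × ℤ))) :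
    Disjoint (List.cons a '' s) (List.cons b '' t) := by
  rw [Set.disjoint_left]
  rintro w ⟨x, _, rfl⟩ ⟨y, _, hy⟩
  simp only [List.cons.injEq] at hy
  exact h hy.1.symm


/-- For every integer `k ≥ 1`, the number of brick-wall lattice paths of the
first type in the rectangle `{0,…,2k−1} × {0,1,2,3}` (width 4, even length
`l = 2k`) equals `6 · 3^(k−1)`. -/
theorem brickPaths_first_width_four_even_length (k : ℕ) (hk : 1 ≤ k) :
    (brickPaths true (2 * (k : ℤ)) 4).ncard = 6 * 3 ^ (k - 1) := by
  set l : ℤ := 2 * (k : ℤ) with hl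
  have hl1 : 1 ≤ l := by simp [hl]; omega
  set n : ℕ := 2 * k - 1 with hn
  have hcast : ((n : ℤ)) = l - 1 := by simp [hn, hl]; omega
  have hS : ∀ y : ℤ, (((0 : ℤ), y) : ℤ × ℤ).1 = l - 1 - n := by intro y; simp; omega
  -- the four pieces
  have hdecomp : brickPaths true l 4 =
      (List.cons ((0 : ℤ), (0 : ℤ)) '' {w | Tail l (0, 0) true w}) ∪
      ((List.cons ((0 : ℤ), (1 : ℤ)) '' {w | Tail l (0, 1) true w}) ∪
      ((List.cons ((0 : ℤ), (2 : ℤ)) '' {w | Tail l (0, 2) true w}) ∪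
       (List.cons ((0 : ℤ), (3 : ℤ)) '' {w | Tail l (0, 3) true w}))) := by
    ext v
    rw [mem_brickPaths_iff hl1]
    constructor
    · rintro ⟨y, w, h0, h3, rfl, ht⟩
      interval_cases y
      · exact Or.inl ⟨w, ht, rfl⟩
      · exact Or.inr (Or.inl ⟨w, ht, rfl⟩)
      · exact Or.inr (Or.inr (Or.inl ⟨w, ht, rfl⟩))
      · exact Or.inr (Or.inr (Or.inr ⟨w, ht, rfl⟩))
    · rintro (⟨w, hw, rfl⟩ | ⟨w, hw, rfl⟩ | ⟨w, hw, rfl⟩ | ⟨w, hw, rfl⟩)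
      · exact ⟨0, w, by norm_num, by norm_num, rfl, hw⟩
      · exact ⟨1, w, by norm_num, by norm_num, rfl, hw⟩
      · exact ⟨2, w, by norm_num, by norm_num, rfl, hw⟩
      · exact ⟨3, w, by norm_num, by norm_num, rfl, hw⟩
  obtain ⟨F0, C0⟩ := countT n l (0, 0) (hS 0)
  obtain ⟨F1, C1⟩ := countT n l (0, 1) (hS 1)
  obtain ⟨F2, C2⟩ := countT n l (0, 2) (hS 2)
  obtain ⟨F3, C3⟩ := countT n l (0, 3) (hS 3)
  have hval : ∀ y : ℤ, Nt n ((0 : ℤ), y) = Nt (2 * (k - 1)) ((1 : ℤ), y) := by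
    intro y
    rw [Nt_no (availP_no (Or.inl rfl))]
    have hn' : n = 2 * (k - 1) + 1 := by omega
    rw [hn', Nf_succ' (2 * (k - 1)) 0 y]
    norm_num
  obtain ⟨V0, V1, V2, V3⟩ := Nt_vals (k - 1) 1 (by norm_num) (by norm_num)
  rw [hdecomp]
  rw [Set.ncard_union_eq
      ((disj_cons (by decide) _ _).union_right
        ((disj_cons (by decide) _ _).union_right (disj_cons (by decide) _ _)))
      (F0.image _) (((F1.image _).union ((F2.image _).union (F3.image _))))]
  rw [Set.ncard_union_eq
      ((disj_cons (by decide) _ _).union_right (disj_cons (by decide) _ _))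
      (F1.image _) ((F2.image _).union (F3.image _))]
  rw [Set.ncard_union_eq (disj_cons (by decide) _ _) (F2.image _) (F3.image _)]
  rw [Set.ncard_image_of_injective _ (cons_inj _), Set.ncard_image_of_injective _ (cons_inj _),
    Set.ncard_image_of_injective _ (cons_inj _), Set.ncard_image_of_injective _ (cons_inj _)]
  rw [C0, C1, C2, C3, hval 0, hval 1, hval 2, hval 3, V0, V1, V2, V3]
  ring
end

section
/- Let M_U be the 3×3 integer matrix with rows (1,1,0), (1,1,0), (0,0,1) and let 𝔉 be the 3×3 integer matrix with rows (1,1,0), (1,1,1), (1,1,1). Then for every integer n ≥ 1, the product M_U·𝔉^n is the matrix with rows (F_{2n+1}, F_{2n+1}, F_{2n}), (F_{2n+1}, F_{2n+1}, F_{2n}), (F_{2n}, F_{2n}, F_{2n−1}). -/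
open Matrix

lemma aux_fib_mat (m : ℕ) :
    (!![1, 1, 0; 1, 1, 0; 0, 0, 1] : Matrix (Fin 3) (Fin 3) ℤ) *
        (!![1, 1, 0; 1, 1, 1; 1, 1, 1] : Matrix (Fin 3) (Fin 3) ℤ) ^ (m + 1) =
      !![(Nat.fib (2 * m + 3) : ℤ), (Nat.fib (2 * m + 3) : ℤ), (Nat.fib (2 * m + 2) : ℤ);
         (Nat.fib (2 * m + 3) : ℤ), (Nat.fib (2 * m + 3) : ℤ), (Nat.fib (2 * m + 2) : ℤ);
         (Nat.fib (2 * m + 2) : ℤ), (Nat.fib (2 * m + 2) : ℤ), (Nat.fib (2 * m + 1) : ℤ)] := by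
  induction m with
  | zero => norm_num [pow_one, Matrix.mul_fin_three]
  | succ k ih =>
    rw [pow_succ, ← mul_assoc, ih]
    have a1 : Nat.fib (2 * k + 3) = Nat.fib (2 * k + 2) + Nat.fib (2 * k + 1) := by
      rw [show 2 * k + 3 = (2 * k + 1) + 2 by ring, Nat.fib_add_two, show 2 * k + 1 + 1 = 2 * k + 2 by ring]; omega
    have a2 : Nat.fib (2 * k + 4) = Nat.fib (2 * k + 3) + Nat.fib (2 * k + 2) := by
      rw [show 2 * k + 4 = (2 * k + 2) + 2 by ring, Nat.fib_add_two, show 2 * k + 2 + 1 = 2 * k + 3 by ring]; omega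
    have a3 : Nat.fib (2 * k + 5) = Nat.fib (2 * k + 4) + Nat.fib (2 * k + 3) := by
      rw [show 2 * k + 5 = (2 * k + 3) + 2 by ring, Nat.fib_add_two, show 2 * k + 3 + 1 = 2 * k + 4 by ring]; omega
    have e1 : Nat.fib (1 + k * 2) = Nat.fib (2 * k + 1) := congrArg Nat.fib (by ring)
    have e2 : Nat.fib (2 + k * 2) = Nat.fib (2 * k + 2) := congrArg Nat.fib (by ring)
    have e3 : Nat.fib (3 + k * 2) = Nat.fib (2 * k + 3) := congrArg Nat.fib (by ring)
    have e4 : Nat.fib (4 + k * 2) = Nat.fib (2 * k + 4) := congrArg Nat.fib (by ring)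
    have e5 : Nat.fib (5 + k * 2) = Nat.fib (2 * k + 5) := congrArg Nat.fib (by ring)
    have e6 : Nat.fib (2 * (k + 1) + 3) = Nat.fib (2 * k + 5) := congrArg Nat.fib (by ring)
    have e7 : Nat.fib (2 * (k + 1) + 2) = Nat.fib (2 * k + 4) := congrArg Nat.fib (by ring)
    have e8 : Nat.fib (2 * (k + 1) + 1) = Nat.fib (2 * k + 3) := congrArg Nat.fib (by ring)
    ext i j
    fin_cases i <;> fin_cases j <;>
      simp [Matrix.mul_apply, Fin.sum_univ_three, Matrix.vecHead, Matrix.vecTail] <;>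
      omega

/-- Let `M_U` be the 3×3 integer matrix with rows `(1,1,0)`, `(1,1,0)`, `(0,0,1)`
and `𝔉` the 3×3 integer matrix with rows `(1,1,0)`, `(1,1,1)`, `(1,1,1)`.
For every integer `n ≥ 1`, the product `M_U · 𝔉^n` has rows
`(F (2n+1), F (2n+1), F 2n)`, `(F (2n+1), F (2n+1), F 2n)`,
`(F 2n, F 2n, F (2n−1))`. -/
theorem mU_mul_pow_fib_matrix (n : ℕ) (hn : 1 ≤ n) :
    (!![1, 1, 0; 1, 1, 0; 0, 0, 1] : Matrix (Fin 3) (Fin 3) ℤ) *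
        (!![1, 1, 0; 1, 1, 1; 1, 1, 1] : Matrix (Fin 3) (Fin 3) ℤ) ^ n =
      !![(Nat.fib (2 * n + 1) : ℤ), (Nat.fib (2 * n + 1) : ℤ), (Nat.fib (2 * n) : ℤ);
         (Nat.fib (2 * n + 1) : ℤ), (Nat.fib (2 * n + 1) : ℤ), (Nat.fib (2 * n) : ℤ);
         (Nat.fib (2 * n) : ℤ), (Nat.fib (2 * n) : ℤ), (Nat.fib (2 * n - 1) : ℤ)] := by
  obtain ⟨m, rfl⟩ := Nat.exists_eq_add_of_le hn
  have e1 : 2 * (1 + m) + 1 = 2 * m + 3 := by ring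
  have e2 : 2 * (1 + m) = 2 * m + 2 := by ring
  have e3 : 2 * (1 + m) - 1 = 2 * m + 1 := by omega
  rw [e1, e3, e2, add_comm 1 m]
  exact aux_fib_mat m
end

section
/- Let 𝔉 be the 3×3 integer matrix with rows (1,1,0), (1,1,1), (1,1,1), let u = (1,1,1) be the all-ones row vector and b_0 = (1,1,1)^T the all-ones column vector. Then for every integer k ≥ 1, u·𝔉^k·b_0 = F_{2k+4}; equivalently, the sum of all nine entries of 𝔉^k equals F_{2k+4}. -/
open Matrix

lemma aux_mulVec (k : ℕ) (hk : 1 ≤ k) :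
    ((!![1, 1, 0; 1, 1, 1; 1, 1, 1] : Matrix (Fin 3) (Fin 3) ℤ) ^ k).mulVec
        (fun _ : Fin 3 => (1 : ℤ)) =
      ![(Nat.fib (2 * k + 1) : ℤ), Nat.fib (2 * k + 2), Nat.fib (2 * k + 2)] := by
  induction k with
  | zero => omega
  | succ n ih =>
    rcases Nat.eq_zero_or_pos n with rfl | hn
    · rw [pow_one]
      have f3 : Nat.fib 3 = 2 := by decide
      have f4 : Nat.fib 4 = 3 := by decide
      funext i
      fin_cases i <;>
        simp [mulVec, dotProduct, Fin.sum_univ_three, f3, f4, Matrix.cons_val_zero,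
          Matrix.cons_val_one, Matrix.head_cons, Matrix.cons_val_two, Matrix.tail_cons, Matrix.vecHead, Matrix.vecTail]
    · rw [pow_succ', ← mulVec_mulVec, ih hn]
      funext i
      have h1 : 2 * (n + 1) + 1 = (2 * n + 1) + 2 := by ring
      have h2 : 2 * (n + 1) + 2 = (2 * n + 2) + 2 := by ring
      fin_cases i <;>
        simp [mulVec, dotProduct, Fin.sum_univ_three, h1, h2, Nat.fib_add_two, Matrix.vecHead, Matrix.vecTail] <;> ring

/-- Let `𝔉` be the 3×3 integer matrix with rows `(1,1,0)`, `(1,1,1)`, `(1,1,1)`,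
`u = (1,1,1)` the all-ones row vector and `b₀ = (1,1,1)ᵀ` the all-ones column
vector. For every integer `k ≥ 1`, `u · 𝔉^k · b₀ = F (2k+4)`; equivalently, the
sum of all nine entries of `𝔉^k` equals `F (2k+4)`. -/
theorem ones_vecMul_pow_mulVec_ones_eq_fib (k : ℕ) (hk : 1 ≤ k) :
    (fun _ : Fin 3 => (1 : ℤ)) ⬝ᵥ
        ((!![1, 1, 0; 1, 1, 1; 1, 1, 1] : Matrix (Fin 3) (Fin 3) ℤ) ^ k).mulVec
          (fun _ : Fin 3 => (1 : ℤ)) =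
      (Nat.fib (2 * k + 4) : ℤ) := by
  rw [aux_mulVec k hk]
  have h3 : 2 * k + 3 = (2 * k + 1) + 2 := by ring
  have h4 : 2 * k + 4 = (2 * k + 2) + 2 := by ring
  simp [dotProduct, Fin.sum_univ_three, h4, h3, Nat.fib_add_two]
  ring_nf
end

section
/- Let M_U be the 3×3 integer matrix with rows (1,1,0), (1,1,0), (0,0,1), let 𝔉 be the 3×3 integer matrix with rows (1,1,0), (1,1,1), (1,1,1), let u = (1,1,1) be the all-ones row vector and b_0 = (1,1,1)^T the all-ones column vector. Then for every integer k ≥ 1, u·M_U·𝔉^{k−1}·b_0 = F_{2k+3}; equivalently, the sum of all nine entries of M_U·𝔉^{k−1} equals F_{2k+3}. -/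
open Matrix

lemma pow_mulVec_ones (n : ℕ) :
    ((!![1, 1, 0; 1, 1, 1; 1, 1, 1] : Matrix (Fin 3) (Fin 3) ℤ) ^ n).mulVec
        (fun _ : Fin 3 => (1 : ℤ)) =
      ![(Nat.fib (2 * n + 1) : ℤ), (Nat.fib (2 * n + 2) : ℤ), (Nat.fib (2 * n + 2) : ℤ)] := by
  induction n with
  | zero =>
    funext i
    fin_cases i <;> simp [Matrix.mulVec, dotProduct, Fin.sum_univ_three]
  | succ n ih =>
    rw [pow_succ', ← Matrix.mulVec_mulVec, ih]
    have h1 : (2 * (n + 1) + 1) = (2 * n + 1) + 2 := by ring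
    have h2 : (2 * (n + 1) + 2) = (2 * n + 2) + 2 := by ring
    funext i
    fin_cases i <;>
      simp [Matrix.mulVec, dotProduct, Fin.sum_univ_three, Matrix.vecHead, Matrix.vecTail, h1, h2,
        Nat.fib_add_two] <;> ring

/-- Let `M_U` be the 3×3 integer matrix with rows `(1,1,0)`, `(1,1,0)`, `(0,0,1)`,
`𝔉` the 3×3 integer matrix with rows `(1,1,0)`, `(1,1,1)`, `(1,1,1)`,
`u = (1,1,1)` the all-ones row vector and `b₀ = (1,1,1)ᵀ` the all-ones column
vector. For every integer `k ≥ 1`, `u · M_U · 𝔉^(k−1) · b₀ = F (2k+3)`;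
equivalently, the sum of all nine entries of `M_U · 𝔉^(k−1)` equals `F (2k+3)`. -/
theorem ones_vecMul_mU_mul_pow_mulVec_ones_eq_fib (k : ℕ) (hk : 1 ≤ k) :
    (fun _ : Fin 3 => (1 : ℤ)) ⬝ᵥ
        ((!![1, 1, 0; 1, 1, 0; 0, 0, 1] : Matrix (Fin 3) (Fin 3) ℤ) *
            (!![1, 1, 0; 1, 1, 1; 1, 1, 1] : Matrix (Fin 3) (Fin 3) ℤ) ^ (k - 1)).mulVec
          (fun _ : Fin 3 => (1 : ℤ)) =
      (Nat.fib (2 * k + 3) : ℤ) := by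
  obtain ⟨n, rfl⟩ := Nat.exists_eq_add_of_le hk
  rw [← Matrix.mulVec_mulVec]
  simp only [Nat.add_sub_cancel_left, add_comm 1 n, Nat.add_sub_cancel, pow_mulVec_ones]
  have h1 : 2 * (n + 1) + 3 = (2 * n + 1) + 4 := by ring
  have h2 : ∀ m, Nat.fib (m + 4) = 3 * Nat.fib (m + 1) + 2 * Nat.fib m := by
    intro m
    simp [show m + 4 = (m+2)+2 from rfl, show m + 3 = (m+1)+2 from rfl, Nat.fib_add_two]
    ring
  rw [h1, h2]
  simp [Matrix.mulVec, dotProduct, Fin.sum_univ_three,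
    show 2 * n + 2 = (2*n) + 2 from rfl, Nat.fib_add_two]
  ring
end

section
/- Let M_U be the 3×3 integer matrix with rows (1,1,0), (1,1,0), (0,0,1), let 𝔉 be the 3×3 integer matrix with rows (1,1,0), (1,1,1), (1,1,1), let u = (1,1,1) be the all-ones row vector and v = (1,1,0). Then for every integer k ≥ 1, u·M_U·𝔉^{k−1}·v^T = 2·F_{2k+1}. -/
open Matrix

lemma fib_aux (n : ℕ) :
    ((!![1, 1, 0; 1, 1, 1; 1, 1, 1] : Matrix (Fin 3) (Fin 3) ℤ) ^ (n + 1)).mulVec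
      ![(1 : ℤ), 1, 0] =
    ![2 * (Nat.fib (2 * n + 1) : ℤ), 2 * (Nat.fib (2 * n + 2) : ℤ),
      2 * (Nat.fib (2 * n + 2) : ℤ)] := by
  induction n with
  | zero =>
      funext i
      fin_cases i <;>
        simp [pow_succ, Matrix.mulVec, dotProduct, Fin.sum_univ_three, Matrix.cons_val_zero, Matrix.cons_val_one, Matrix.head_cons, Matrix.cons_val', Matrix.head_fin_const, Matrix.empty_val', Matrix.cons_val_fin_one, Matrix.vecHead, Matrix.vecTail]
  | succ m ih =>
      have h : (!![1, 1, 0; 1, 1, 1; 1, 1, 1] : Matrix (Fin 3) (Fin 3) ℤ) ^ (m + 2) =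
          !![1, 1, 0; 1, 1, 1; 1, 1, 1] * !![1, 1, 0; 1, 1, 1; 1, 1, 1] ^ (m + 1) := by
        rw [pow_succ']
      rw [h, ← Matrix.mulVec_mulVec, ih]
      funext i
      have h1 : 2 * (m + 1) + 1 = (2 * m + 1) + 2 := by ring
      have h2 : 2 * (m + 1) + 2 = (2 * m + 2) + 2 := by ring
      fin_cases i <;>
        simp [Matrix.mulVec, dotProduct, Fin.sum_univ_three, h1, h2, Matrix.cons_val_zero, Matrix.cons_val_one, Matrix.head_cons, Matrix.cons_val', Matrix.head_fin_const, Matrix.empty_val', Matrix.cons_val_fin_one, Matrix.vecHead, Matrix.vecTail,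
          Nat.fib_add_two] <;> push_cast <;> ring

/-- Let `M_U` be the 3×3 integer matrix with rows `(1,1,0)`, `(1,1,0)`, `(0,0,1)`,
`𝔉` the 3×3 integer matrix with rows `(1,1,0)`, `(1,1,1)`, `(1,1,1)`,
`u = (1,1,1)` the all-ones row vector and `v = (1,1,0)`. For every integer
`k ≥ 1`, `u · M_U · 𝔉^(k−1) · vᵀ = 2 · F (2k+1)`. -/
theorem ones_vecMul_mU_mul_pow_mulVec_v_eq_two_fib (k : ℕ) (hk : 1 ≤ k) :
    (fun _ : Fin 3 => (1 : ℤ)) ⬝ᵥ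
        ((!![1, 1, 0; 1, 1, 0; 0, 0, 1] : Matrix (Fin 3) (Fin 3) ℤ) *
            (!![1, 1, 0; 1, 1, 1; 1, 1, 1] : Matrix (Fin 3) (Fin 3) ℤ) ^ (k - 1)).mulVec
          ![(1 : ℤ), 1, 0] =
      2 * (Nat.fib (2 * k + 1) : ℤ) := by
  obtain ⟨n, rfl⟩ := Nat.exists_eq_add_of_le hk
  rw [add_comm 1 n]
  cases n with
  | zero => decide
  | succ m =>
      have hs : m + 1 + 1 - 1 = m + 1 := rfl
      rw [hs, ← Matrix.mulVec_mulVec, fib_aux]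
      have h1 : 2 * (m + 1 + 1) + 1 = (2 * m + 2) + 3 := by ring
      simp [Matrix.mulVec, dotProduct, Fin.sum_univ_three, h1,
        Nat.fib_add_two, show (2*m+2)+3 = ((2*m+1)+2)+2 from by ring]
      push_cast
      ring
end

section
/- Let M_− be the 4×4 integer matrix with rows (1,0,0,0), (0,1,1,0), (0,1,1,0), (0,0,0,1) and M_+ the 4×4 integer matrix with rows (1,1,0,0), (1,1,0,0), (0,0,1,1), (0,0,1,1); let u = (1,1,1,1) be the all-ones row vector and b_0 = (1,1,1,1)^T the all-ones column vector. Then for every natural number k, u·(M_−·M_+)^k·b_0 = 4·3^k. -/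
open Matrix

lemma ones_vecMul_A :
    Matrix.vecMul (fun _ : Fin 4 => (1 : ℤ))
      ((!![1, 0, 0, 0; 0, 1, 1, 0; 0, 1, 1, 0; 0, 0, 0, 1] :
          Matrix (Fin 4) (Fin 4) ℤ) *
        (!![1, 1, 0, 0; 1, 1, 0, 0; 0, 0, 1, 1; 0, 0, 1, 1] :
          Matrix (Fin 4) (Fin 4) ℤ)) =
    (3 : ℤ) • (fun _ : Fin 4 => (1 : ℤ)) := by
  funext i
  fin_cases i <;>
    simp [Matrix.vecMul, Matrix.mul_apply, dotProduct, Fin.sum_univ_four,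
      Matrix.vecHead, Matrix.vecTail]

/-- Let `M₋` be the 4×4 integer matrix with rows `(1,0,0,0)`, `(0,1,1,0)`,
`(0,1,1,0)`, `(0,0,0,1)` and `M₊` the 4×4 integer matrix with rows `(1,1,0,0)`,
`(1,1,0,0)`, `(0,0,1,1)`, `(0,0,1,1)`; let `u = (1,1,1,1)` be the all-ones row
vector and `b₀ = (1,1,1,1)ᵀ` the all-ones column vector. For every natural
number `k`, `u · (M₋ · M₊)^k · b₀ = 4 · 3^k`. -/
theorem ones_vecMul_pow_mMinus_mPlus_mulVec_ones (k : ℕ) :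
    (fun _ : Fin 4 => (1 : ℤ)) ⬝ᵥ
        (((!![1, 0, 0, 0; 0, 1, 1, 0; 0, 1, 1, 0; 0, 0, 0, 1] :
              Matrix (Fin 4) (Fin 4) ℤ) *
            (!![1, 1, 0, 0; 1, 1, 0, 0; 0, 0, 1, 1; 0, 0, 1, 1] :
              Matrix (Fin 4) (Fin 4) ℤ)) ^ k).mulVec
          (fun _ : Fin 4 => (1 : ℤ)) =
      4 * 3 ^ k := by
  induction k with
  | zero =>
      simp [Matrix.mulVec, dotProduct, Fin.sum_univ_four, Matrix.one_apply]
  | succ n ih =>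
      rw [pow_succ', Matrix.dotProduct_mulVec, ← Matrix.vecMul_vecMul,
        ones_vecMul_A, Matrix.smul_vecMul, smul_dotProduct,
        ← Matrix.dotProduct_mulVec, ih]
      push_cast [smul_eq_mul]
      ring
end

section
/- Let M_− be the 4×4 integer matrix with rows (1,0,0,0), (0,1,1,0), (0,1,1,0), (0,0,0,1) and M_+ the 4×4 integer matrix with rows (1,1,0,0), (1,1,0,0), (0,0,1,1), (0,0,1,1); let u = (1,1,1,1) be the all-ones row vector and b_0 = (1,1,1,1)^T the all-ones column vector. Then for every integer k ≥ 1, u·M_+·(M_−·M_+)^{k−1}·b_0 = 8·3^{k−1}. -/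
open Matrix

private abbrev Mp : Matrix (Fin 4) (Fin 4) ℤ := !![1, 1, 0, 0; 1, 1, 0, 0; 0, 0, 1, 1; 0, 0, 1, 1]
private abbrev Mm : Matrix (Fin 4) (Fin 4) ℤ := !![1, 0, 0, 0; 0, 1, 1, 0; 0, 1, 1, 0; 0, 0, 0, 1]

private lemma aux (n : ℕ) :
    (Mp * (Mm * Mp) ^ n).mulVec (fun _ => (1:ℤ)) = (fun _ => 2 * 3 ^ n) ∧
    (Mp * (Mm * Mp) ^ n).mulVec ![2, 4, 4, 2] = (fun _ => 6 * 3 ^ n) := by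
  induction n with
  | zero =>
    constructor <;> · funext i; fin_cases i <;> simp [mulVec, dotProduct, Fin.sum_univ_four, Matrix.mul_apply, Matrix.vecHead, Matrix.vecTail]
  | succ n ih =>
    have h1 : (Mm * Mp).mulVec (fun _ => (1:ℤ)) = ![2, 4, 4, 2] := by
      funext i; fin_cases i <;> simp [mulVec, dotProduct, Fin.sum_univ_four, Matrix.mul_apply, Matrix.vecHead, Matrix.vecTail]
    have h2 : (Mm * Mp).mulVec ![2, 4, 4, 2] = (3:ℤ) • ![2, 4, 4, 2] := by
      funext i; fin_cases i <;> simp [mulVec, dotProduct, Fin.sum_univ_four, Matrix.mul_apply, Matrix.vecHead, Matrix.vecTail]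
    have key : ∀ v : Fin 4 → ℤ, (Mp * (Mm * Mp) ^ (n+1)).mulVec v
        = (Mp * (Mm * Mp) ^ n).mulVec ((Mm * Mp).mulVec v) := by
      intro v
      rw [pow_succ, ← Matrix.mul_assoc, Matrix.mulVec_mulVec]
    constructor
    · rw [key, h1, ih.2]; funext i; ring
    · rw [key, h2, Matrix.mulVec_smul, ih.2]; funext i; simp; ring

/-- Let `M₋` be the 4×4 integer matrix with rows `(1,0,0,0)`, `(0,1,1,0)`,
`(0,1,1,0)`, `(0,0,0,1)` and `M₊` the 4×4 integer matrix with rows `(1,1,0,0)`,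
`(1,1,0,0)`, `(0,0,1,1)`, `(0,0,1,1)`; let `u = (1,1,1,1)` be the all-ones row
vector and `b₀ = (1,1,1,1)ᵀ` the all-ones column vector. For every integer
`k ≥ 1`, `u · M₊ · (M₋ · M₊)^(k−1) · b₀ = 8 · 3^(k−1)`. -/
theorem ones_vecMul_mPlus_mul_pow_mulVec_ones (k : ℕ) (hk : 1 ≤ k) :
    (fun _ : Fin 4 => (1 : ℤ)) ⬝ᵥ
        ((!![1, 1, 0, 0; 1, 1, 0, 0; 0, 0, 1, 1; 0, 0, 1, 1] :
              Matrix (Fin 4) (Fin 4) ℤ) *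
            ((!![1, 0, 0, 0; 0, 1, 1, 0; 0, 1, 1, 0; 0, 0, 0, 1] :
                Matrix (Fin 4) (Fin 4) ℤ) *
              (!![1, 1, 0, 0; 1, 1, 0, 0; 0, 0, 1, 1; 0, 0, 1, 1] :
                Matrix (Fin 4) (Fin 4) ℤ)) ^ (k - 1)).mulVec
          (fun _ : Fin 4 => (1 : ℤ)) =
      8 * 3 ^ (k - 1) := by
  rw [(aux (k-1)).1]
  simp [dotProduct, Fin.sum_univ_four]
  ring
end
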